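/- arXiv:1305.1572 — 7 statements merged into one kernel-verified Lean document; each statement's English description precedes it below -/
import Mathlib

section
/- Let f₋, f₊ : ℝ → ℝ be C¹ functions such that f₋, f₊, f₋′, f₊′ are bounded, and let f be the Poisson extension of (f₋, f₊). Then for every (s,t) in the open strip S, ∂f/∂s (s,t) equals the Poisson extension of (f₋′, f₊′) evaluated at (s,t). Moreover, if there are λ ∈ (0,1), S₀ ∈ ℝ and M > 0 with |f₋′(s)| ≤ M e^{−λs} and |f₊′(s)| ≤ M e^{−λs} for all s ≥ S₀, then there is M′ > 0 with |∂f/∂s (s,t)| ≤ M′ e^{−λs} for all s ≥ S₀ + 1 and all t ∈ (0,1). -/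
open Real MeasureTheory Set

/-- The Poisson kernel of the unit strip `{s + it : 0 < t < 1}`. -/
noncomputable def stripPoissonKernel (s t : ℝ) : ℝ :=
  Real.sin (π * t) / (Real.cosh s - Real.cos (π * t))

/-- The Poisson extension to the strip of a pair of boundary functions `f₋, f₊ : ℝ → ℝ`. -/
noncomputable def poissonExt (fm fp : ℝ → ℝ) (s t : ℝ) : ℝ :=
  (1 / (2 * π)) *
    ∫ σ : ℝ, (stripPoissonKernel (σ - s) t * fm σ + stripPoissonKernel (σ - s) (1 - t) * fp σ)

section aux
variable {t : ℝ}

lemma sin_pit_pos (h0 : 0 < t) (h1 : t < 1) : 0 < Real.sin (π * t) :=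
  Real.sin_pos_of_pos_of_lt_pi (mul_pos pi_pos h0) (by nlinarith [Real.pi_pos])

lemma cos_pit_lt_one (h0 : 0 < t) (h1 : t < 1) : Real.cos (π * t) < 1 := by
  have h := Real.cos_lt_cos_of_nonneg_of_le_pi (le_refl 0)
    (by nlinarith [Real.pi_pos] : π * t ≤ π) (by positivity)
  simpa using h

lemma denom_pos (h0 : 0 < t) (h1 : t < 1) (σ : ℝ) :
    0 < Real.cosh σ - Real.cos (π * t) := by
  have := Real.one_le_cosh σ
  have := cos_pit_lt_one h0 h1
  linarith

lemma kernel_nonneg (h0 : 0 < t) (h1 : t < 1) (σ : ℝ) : 0 ≤ stripPoissonKernel σ t :=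
  div_nonneg (sin_pit_pos h0 h1).le (denom_pos h0 h1 σ).le

lemma cosh_ge_quad (σ : ℝ) : 1 + σ ^ 2 / 2 ≤ Real.cosh σ := by
  have h := Real.cosh_two_mul (σ / 2)
  have h2 : Real.cosh (σ/2) ^ 2 = Real.sinh (σ/2) ^ 2 + 1 := Real.cosh_sq (σ/2)
  have h3 : |σ / 2| ≤ |Real.sinh (σ / 2)| := by
    rcases le_or_gt 0 (σ/2) with h4 | h4
    · rw [abs_of_nonneg h4, abs_of_nonneg (by simpa [Real.sinh_nonneg_iff] using h4)]
      exact Real.self_le_sinh_iff.2 h4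
    · rw [abs_of_neg h4, abs_of_neg (by simpa [Real.sinh_neg_iff] using h4), ← Real.sinh_neg]
      exact Real.self_le_sinh_iff.2 (by linarith)
  have h5 : (σ/2)^2 ≤ Real.sinh (σ/2)^2 := by
    rw [← sq_abs (σ/2), ← sq_abs (Real.sinh (σ/2))]
    exact pow_le_pow_left₀ (abs_nonneg _) h3 2
  have : Real.cosh σ = Real.cosh (2 * (σ/2)) := by ring_nf
  nlinarith

lemma cosh_ge_exp (σ : ℝ) : Real.exp |σ| / 2 ≤ Real.cosh σ := by
  rw [← Real.cosh_abs, Real.cosh_eq]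
  have := (Real.exp_pos (-|σ|)).le
  linarith

lemma kernel_le_quad (h0 : 0 < t) (h1 : t < 1) (σ : ℝ) :
    stripPoissonKernel σ t ≤ Real.sin (π * t) / ((1 - Real.cos (π * t)) + σ ^ 2 / 2) := by
  apply div_le_div_of_nonneg_left (sin_pit_pos h0 h1).le
  · have := cos_pit_lt_one h0 h1; nlinarith [sq_nonneg σ]
  · have := cosh_ge_quad σ; linarith

lemma kernel_le_exp (h0 : 0 < t) (h1 : t < 1) {σ : ℝ} (hσ : 1 ≤ |σ|) :
    stripPoissonKernel σ t ≤ 10 * Real.exp (-|σ|) := by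
  have he : Real.exp 1 ≤ Real.exp |σ| := Real.exp_le_exp.2 hσ
  have he1 : (5:ℝ)/2 ≤ Real.exp 1 := by
    have := Real.exp_one_gt_d9; linarith
  have hden : Real.exp |σ| / 10 ≤ Real.cosh σ - Real.cos (π * t) := by
    have h2 := cosh_ge_exp σ
    have h3 : Real.cos (π * t) ≤ 1 := Real.cos_le_one _
    nlinarith
  have hden0 : (0:ℝ) < Real.exp |σ| / 10 := by positivity
  have hsin : Real.sin (π * t) ≤ 1 := Real.sin_le_one _
  calc stripPoissonKernel σ t ≤ 1 / (Real.exp |σ| / 10) := by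
        apply div_le_div₀ zero_le_one hsin hden0 hden
    _ = 10 * Real.exp (-|σ|) := by
        rw [Real.exp_neg]; field_simp
end aux

section int
variable {t : ℝ}

lemma kernel_cont (h0 : 0 < t) (h1 : t < 1) :
    Continuous fun σ => stripPoissonKernel σ t := by
  apply continuous_const.div (by fun_prop)
  exact fun σ => (denom_pos h0 h1 σ).ne'

lemma quad_eq (a : ℝ) {b : ℝ} (hb : 0 < b) (σ : ℝ) :
    a / (b + σ ^ 2 / 2) = (a / b) * (1 + (σ / Real.sqrt (2 * b)) ^ 2)⁻¹ := by
  have hs : Real.sqrt (2 * b) ^ 2 = 2 * b := Real.sq_sqrt (by linarith)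
  have h1 : (σ / Real.sqrt (2 * b)) ^ 2 = σ ^ 2 / (2 * b) := by rw [div_pow, hs]
  rw [h1]
  field_simp

lemma quad_integrable (a : ℝ) {b : ℝ} (hb : 0 < b) :
    Integrable (fun σ : ℝ => a / (b + σ ^ 2 / 2)) := by
  have hs0 : Real.sqrt (2 * b) ≠ 0 := by positivity
  have : (fun σ : ℝ => a / (b + σ ^ 2 / 2)) =
      fun σ : ℝ => (a / b) * (1 + (σ / Real.sqrt (2 * b)) ^ 2)⁻¹ := by
    funext σ; exact quad_eq a hb σ
  rw [this]
  exact (integrable_inv_one_add_sq.comp_div hs0).const_mul _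

lemma quad_integral {a b : ℝ} (hb : 0 < b) :
    ∫ σ : ℝ, a / (b + σ ^ 2 / 2) = (a / b) * (Real.sqrt (2 * b) * π) := by
  simp_rw [fun σ => quad_eq a hb σ]
  rw [integral_const_mul,
    Measure.integral_comp_div (fun x : ℝ => (1 + x ^ 2)⁻¹) (Real.sqrt (2*b)),
    integral_univ_inv_one_add_sq, abs_of_nonneg (Real.sqrt_nonneg _), smul_eq_mul]

lemma sin_le_sqrt_two_b {t : ℝ} (h0 : 0 < t) (h1 : t < 1) :
    Real.sin (π * t) ≤ Real.sqrt (2 * (1 - Real.cos (π * t))) := by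
  have hc1 : -1 ≤ Real.cos (π * t) := Real.neg_one_le_cos _
  have hsq : Real.sin (π * t) ^ 2 ≤ 2 * (1 - Real.cos (π * t)) := by
    nlinarith [Real.sin_sq_add_cos_sq (π * t)]
  calc Real.sin (π * t) = Real.sqrt (Real.sin (π * t) ^ 2) := by
        rw [Real.sqrt_sq (sin_pit_pos h0 h1).le]
    _ ≤ _ := Real.sqrt_le_sqrt hsq

lemma quad_integral_le (h0 : 0 < t) (h1 : t < 1) :
    ∫ σ : ℝ, Real.sin (π * t) / ((1 - Real.cos (π * t)) + σ ^ 2 / 2) ≤ 2 * π := by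
  set a := Real.sin (π * t) with hadef
  set b := 1 - Real.cos (π * t) with hbdef
  have hb : 0 < b := by have := cos_pit_lt_one h0 h1; rw [hbdef]; linarith
  rw [quad_integral hb]
  have h2 : a ≤ Real.sqrt (2 * b) := sin_le_sqrt_two_b h0 h1
  have ha : 0 ≤ a := (sin_pit_pos h0 h1).le
  have hr : Real.sqrt (2 * b) ^ 2 = 2 * b := Real.sq_sqrt (by linarith)
  rw [div_mul_eq_mul_div, div_le_iff₀ hb]
  nlinarith [Real.pi_pos, Real.sqrt_nonneg (2*b),
    mul_le_mul_of_nonneg_right h2 (Real.sqrt_nonneg (2*b))]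

end int

section expabs

lemma integrable_exp_neg_abs_one : Integrable (fun u : ℝ => Real.exp (-|u|)) := by
  rw [← integrableOn_univ, ← Set.Iic_union_Ioi (a := (0:ℝ))]
  apply IntegrableOn.union
  · apply ((integrableOn_exp_Iic 0).congr_fun _ measurableSet_Iic)
    intro u hu
    simp only [Set.mem_Iic] at hu
    simp [abs_of_nonpos hu]
  · apply ((exp_neg_integrableOn_Ioi 0 one_pos).congr_fun _ measurableSet_Ioi)
    intro u hu
    simp only [Set.mem_Ioi] at hu
    simp [abs_of_pos hu]

lemma integrable_exp_neg_abs {d : ℝ} (hd : 0 < d) :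
    Integrable (fun u : ℝ => Real.exp (-(d * |u|))) := by
  have : (fun u : ℝ => Real.exp (-(d * |u|))) =
      fun u : ℝ => Real.exp (-|d * u|) := by
    funext u; rw [abs_mul, abs_of_pos hd]
  rw [this]
  exact integrable_exp_neg_abs_one.comp_mul_left' hd.ne'

lemma integral_exp_neg_mul_Ioi {d : ℝ} (hd : 0 < d) :
    ∫ u in Set.Ioi (0:ℝ), Real.exp (-(d * u)) = 1 / d := by
  have hint : IntegrableOn (fun u : ℝ => Real.exp (-(d * u))) (Set.Ioi 0) := by
    apply (exp_neg_integrableOn_Ioi 0 hd).congr_fun _ measurableSet_Ioi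
    intro u _; simp [neg_mul]
  have hderiv : ∀ x ∈ Set.Ici (0:ℝ),
      HasDerivAt (fun u : ℝ => -(Real.exp (-(d * u)) / d)) (Real.exp (-(d * x))) x := by
    intro x _
    have h1 : HasDerivAt (fun u : ℝ => -(d * u)) (-d) x := by
      simpa using ((hasDerivAt_id x).const_mul (-d))
    have h2 : HasDerivAt (fun u : ℝ => -(Real.exp (-(d * u)) / d))
        (-(Real.exp (-(d * x)) * -d / d)) x := (h1.exp.div_const d).neg
    convert h2 using 1
    field_simp
  have htend : Filter.Tendsto (fun u : ℝ => -(Real.exp (-(d * u)) / d))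
      Filter.atTop (nhds 0) := by
    have h3 : Filter.Tendsto (fun u : ℝ => -(d * u)) Filter.atTop Filter.atBot :=
      Filter.tendsto_neg_atBot_iff.mpr (Filter.Tendsto.const_mul_atTop hd Filter.tendsto_id)
    have h4 := (Real.tendsto_exp_atBot.comp h3).div_const d
    simpa using h4.neg
  have := integral_Ioi_of_hasDerivAt_of_tendsto' hderiv hint htend
  rw [this]
  simp

lemma integral_exp_neg_abs_le {d : ℝ} (hd : 0 < d) :
    ∫ u : ℝ, Real.exp (-(d * |u|)) ≤ 2 / d := by
  have hint := integrable_exp_neg_abs hd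
  have h1 : ∫ u in Set.Ioi (0:ℝ), Real.exp (-(d * |u|)) = 1 / d := by
    have he : Set.EqOn (fun u : ℝ => Real.exp (-(d * |u|)))
        (fun u : ℝ => Real.exp (-(d * u))) (Set.Ioi 0) := fun u hu => by
      simp only []
      rw [abs_of_pos (Set.mem_Ioi.mp hu)]
    rw [setIntegral_congr_fun measurableSet_Ioi he, integral_exp_neg_mul_Ioi hd]
  have h2 : ∫ u in Set.Iic (0:ℝ), Real.exp (-(d * |u|)) = 1 / d := by
    have hcn := integral_comp_neg_Iic 0 (fun v : ℝ => Real.exp (-(d * |v|)))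
    simp only [abs_neg, neg_zero] at hcn
    rw [hcn, h1]
  rw [← intervalIntegral.integral_Iic_add_Ioi (b := (0:ℝ)) hint.integrableOn hint.integrableOn,
    h1, h2]
  rw [← add_div, one_add_one_eq_two]

end expabs

section ker
variable {t : ℝ}

lemma kernel_integrable (h0 : 0 < t) (h1 : t < 1) :
    Integrable (fun σ : ℝ => stripPoissonKernel σ t) := by
  have hb : 0 < 1 - Real.cos (π * t) := by have := cos_pit_lt_one h0 h1; linarith
  apply Integrable.mono' (quad_integrable (Real.sin (π * t)) hb)
    ((kernel_cont h0 h1).aestronglyMeasurable)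
  filter_upwards with σ
  rw [Real.norm_eq_abs, abs_of_nonneg (kernel_nonneg h0 h1 σ)]
  exact kernel_le_quad h0 h1 σ

lemma kernel_mul_integrable (h0 : 0 < t) (h1 : t < 1) {g : ℝ → ℝ} {C : ℝ}
    (hg : Continuous g) (hC : ∀ y, |g y| ≤ C) (x : ℝ) :
    Integrable (fun u : ℝ => stripPoissonKernel u t * g (u + x)) := by
  apply Integrable.mono' ((kernel_integrable h0 h1).mul_const C)
    (((kernel_cont h0 h1).mul (hg.comp (by fun_prop))).aestronglyMeasurable)
  filter_upwards with u
  rw [Real.norm_eq_abs, Pi.mul_apply, Function.comp_apply, abs_mul, abs_of_nonneg (kernel_nonneg h0 h1 u)]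
  exact mul_le_mul_of_nonneg_left (hC _) (kernel_nonneg h0 h1 u)

/-- the λ-weighted majorant -/
noncomputable def psi (t lam : ℝ) (u : ℝ) : ℝ :=
  Real.exp 1 * (Real.sin (π * t) / ((1 - Real.cos (π * t)) + u ^ 2 / 2)) +
    10 * Real.exp (-((1 - lam) * |u|))

lemma kernel_exp_le_psi (h0 : 0 < t) (h1 : t < 1) {lam : ℝ} (hl0 : 0 < lam)
    (hl1 : lam < 1) (u : ℝ) :
    stripPoissonKernel u t * Real.exp (-(lam * u)) ≤ psi t lam u := by
  have hb : 0 < 1 - Real.cos (π * t) := by have := cos_pit_lt_one h0 h1; linarith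
  have hknn := kernel_nonneg h0 h1 u
  have hq : 0 ≤ Real.sin (π * t) / ((1 - Real.cos (π * t)) + u ^ 2 / 2) := by
    apply div_nonneg (sin_pit_pos h0 h1).le; nlinarith [sq_nonneg u]
  rcases le_or_gt (|u|) 1 with hu | hu
  · have he : Real.exp (-(lam * u)) ≤ Real.exp 1 := by
      apply Real.exp_le_exp.2
      have h4 : -(lam * u) ≤ lam * |u| := by
        rw [← mul_neg]
        exact mul_le_mul_of_nonneg_left (neg_le_abs u) hl0.le
      nlinarith
    have := mul_le_mul (kernel_le_quad h0 h1 u) he (Real.exp_pos _).le hq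
    unfold psi
    nlinarith [Real.exp_pos (-((1 - lam) * |u|))]
  · have hk := kernel_le_exp h0 h1 hu.le
    have he : Real.exp (-(lam * u)) ≤ Real.exp (lam * |u|) := by
      apply Real.exp_le_exp.2
      rw [← mul_neg]
      exact mul_le_mul_of_nonneg_left (neg_le_abs u) hl0.le
    have h2 : stripPoissonKernel u t * Real.exp (-(lam * u)) ≤
        10 * Real.exp (-|u|) * Real.exp (lam * |u|) := by
      apply mul_le_mul hk he (Real.exp_pos _).le (by positivity)
    have h3 : Real.exp (-|u|) * Real.exp (lam * |u|) = Real.exp (-((1 - lam) * |u|)) := by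
      rw [← Real.exp_add]; ring_nf
    unfold psi
    rw [mul_assoc, h3] at h2
    nlinarith [mul_nonneg (Real.exp_pos 1).le hq]

lemma psi_integrable (h0 : 0 < t) (h1 : t < 1) {lam : ℝ} (hl1 : lam < 1) :
    Integrable (psi t lam) := by
  have hb : 0 < 1 - Real.cos (π * t) := by have := cos_pit_lt_one h0 h1; linarith
  unfold psi
  exact ((quad_integrable _ hb).const_mul _).add
    ((integrable_exp_neg_abs (by linarith)).const_mul _)

lemma psi_nonneg (h0 : 0 < t) (h1 : t < 1) {lam : ℝ} (u : ℝ) : 0 ≤ psi t lam u := by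
  unfold psi
  have hb : 0 < 1 - Real.cos (π * t) := by have := cos_pit_lt_one h0 h1; linarith
  have : 0 ≤ Real.sin (π * t) / ((1 - Real.cos (π * t)) + u ^ 2 / 2) := by
    apply div_nonneg (sin_pit_pos h0 h1).le; nlinarith [sq_nonneg u]
  positivity

lemma psi_integral_le (h0 : 0 < t) (h1 : t < 1) {lam : ℝ} (hl1 : lam < 1) :
    ∫ u : ℝ, psi t lam u ≤ Real.exp 1 * (2 * π) + 10 * (2 / (1 - lam)) := by
  have hb : 0 < 1 - Real.cos (π * t) := by have := cos_pit_lt_one h0 h1; linarith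
  unfold psi
  rw [integral_add (((quad_integrable _ hb).const_mul _))
    ((integrable_exp_neg_abs (by linarith)).const_mul _), integral_const_mul, integral_const_mul]
  have h2 := integral_exp_neg_abs_le (d := 1 - lam) (by linarith)
  have h3 := quad_integral_le h0 h1
  have he := (Real.exp_pos 1).le
  nlinarith
end ker

section part1

lemma poissonExt_shift (fm fp : ℝ → ℝ) (x t : ℝ) :
    poissonExt fm fp x t = (1 / (2 * π)) *
      ∫ u : ℝ, (stripPoissonKernel u t * fm (u + x) + stripPoissonKernel u (1 - t) * fp (u + x)) := by
  unfold poissonExt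
  congr 1
  rw [← integral_add_right_eq_self (μ := volume)
    (fun σ : ℝ => stripPoissonKernel (σ - x) t * fm σ + stripPoissonKernel (σ - x) (1 - t) * fp σ) x]
  simp only [add_sub_cancel_right]

variable {fm fp : ℝ → ℝ}

lemma hasDerivAt_J (hfm : ContDiff ℝ 1 fm) (hfp : ContDiff ℝ 1 fp)
    {Cm0 Cp0 Cm Cp : ℝ} (hCm0 : ∀ y, |fm y| ≤ Cm0) (hCp0 : ∀ y, |fp y| ≤ Cp0)
    (hCm : ∀ y, |deriv fm y| ≤ Cm) (hCp : ∀ y, |deriv fp y| ≤ Cp)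
    {t : ℝ} (h0 : 0 < t) (h1 : t < 1) (s : ℝ) :
    HasDerivAt (fun x : ℝ => ∫ u : ℝ, (stripPoissonKernel u t * fm (u + x) +
        stripPoissonKernel u (1 - t) * fp (u + x)))
      (∫ u : ℝ, (stripPoissonKernel u t * deriv fm (u + s) +
        stripPoissonKernel u (1 - t) * deriv fp (u + s))) s := by
  have h0' : 0 < 1 - t := by linarith
  have h1' : 1 - t < 1 := by linarith
  have hfmc : Continuous fm := hfm.continuous
  have hfpc : Continuous fp := hfp.continuous
  have hfmc' : Continuous (deriv fm) := hfm.continuous_deriv le_rfl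
  have hfpc' : Continuous (deriv fp) := hfp.continuous_deriv le_rfl
  set F : ℝ → ℝ → ℝ := fun x u => stripPoissonKernel u t * fm (u + x) +
      stripPoissonKernel u (1 - t) * fp (u + x) with hF
  set F' : ℝ → ℝ → ℝ := fun x u => stripPoissonKernel u t * deriv fm (u + x) +
      stripPoissonKernel u (1 - t) * deriv fp (u + x) with hF'
  have hmeas : ∀ᶠ x in nhds s, AEStronglyMeasurable (F x) volume := by
    filter_upwards with x
    exact (((kernel_cont h0 h1).mul (hfmc.comp (by fun_prop))).add
      (((kernel_cont h0' h1').mul (hfpc.comp (by fun_prop))))).aestronglyMeasurable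
  have hint : Integrable (F s) :=
    (kernel_mul_integrable h0 h1 hfmc hCm0 s).add (kernel_mul_integrable h0' h1' hfpc hCp0 s)
  have hmeas' : AEStronglyMeasurable (F' s) volume :=
    (((kernel_cont h0 h1).mul (hfmc'.comp (by fun_prop))).add
      (((kernel_cont h0' h1').mul (hfpc'.comp (by fun_prop))))).aestronglyMeasurable
  have hbound : ∀ᵐ u : ℝ, ∀ x ∈ Metric.ball s 1, ‖F' x u‖ ≤
      (stripPoissonKernel u t + stripPoissonKernel u (1 - t)) * max Cm Cp := by
    filter_upwards with u
    intro x _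
    have k1 := kernel_nonneg h0 h1 u
    have k2 := kernel_nonneg h0' h1' u
    rw [Real.norm_eq_abs]
    calc |F' x u| ≤ |stripPoissonKernel u t * deriv fm (u + x)| +
          |stripPoissonKernel u (1 - t) * deriv fp (u + x)| := abs_add_le _ _
      _ ≤ stripPoissonKernel u t * max Cm Cp + stripPoissonKernel u (1 - t) * max Cm Cp := by
          rw [abs_mul, abs_mul, abs_of_nonneg k1, abs_of_nonneg k2]
          gcongr
          · exact (hCm _).trans (le_max_left _ _)
          · exact (hCp _).trans (le_max_right _ _)
      _ = _ := by ring
  have bint : Integrable (fun u : ℝ =>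
      (stripPoissonKernel u t + stripPoissonKernel u (1 - t)) * max Cm Cp) :=
    ((kernel_integrable h0 h1).add (kernel_integrable h0' h1')).mul_const _
  have hdiff : ∀ᵐ u : ℝ, ∀ x ∈ Metric.ball s 1, HasDerivAt (fun x => F x u) (F' x u) x := by
    filter_upwards with u
    intro x _
    have hm : HasDerivAt (fun x : ℝ => fm (u + x)) (deriv fm (u + x)) x := by
      have h1d : HasDerivAt (fun x : ℝ => u + x) 1 x := by
        simpa using (hasDerivAt_id x).const_add u
      have h0d : HasDerivAt fm (deriv fm (u + x)) (u + x) :=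
        (hfm.differentiable one_ne_zero (u + x)).hasDerivAt
      have hc := h0d.comp x h1d
      rw [mul_one] at hc
      exact hc
    have hp : HasDerivAt (fun x : ℝ => fp (u + x)) (deriv fp (u + x)) x := by
      have h1d : HasDerivAt (fun x : ℝ => u + x) 1 x := by
        simpa using (hasDerivAt_id x).const_add u
      have h0d : HasDerivAt fp (deriv fp (u + x)) (u + x) :=
        (hfp.differentiable one_ne_zero (u + x)).hasDerivAt
      have hc := h0d.comp x h1d
      rw [mul_one] at hc
      exact hc
    exact (hm.const_mul (stripPoissonKernel u t)).add (hp.const_mul (stripPoissonKernel u (1 - t)))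
  exact (hasDerivAt_integral_of_dominated_loc_of_deriv_le (Metric.ball_mem_nhds s one_pos) hmeas hint hmeas'
    hbound bint hdiff).2

lemma deriv_poissonExt (hfm : ContDiff ℝ 1 fm) (hfp : ContDiff ℝ 1 fp)
    {Cm0 Cp0 Cm Cp : ℝ} (hCm0 : ∀ y, |fm y| ≤ Cm0) (hCp0 : ∀ y, |fp y| ≤ Cp0)
    (hCm : ∀ y, |deriv fm y| ≤ Cm) (hCp : ∀ y, |deriv fp y| ≤ Cp)
    {t : ℝ} (h0 : 0 < t) (h1 : t < 1) (s : ℝ) :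
    deriv (fun x : ℝ => poissonExt fm fp x t) s = poissonExt (deriv fm) (deriv fp) s t := by
  have heq : (fun x : ℝ => poissonExt fm fp x t) = fun x : ℝ => (1 / (2 * π)) *
      ∫ u : ℝ, (stripPoissonKernel u t * fm (u + x) + stripPoissonKernel u (1 - t) * fp (u + x)) := by
    funext x; exact poissonExt_shift fm fp x t
  rw [heq, ((hasDerivAt_J hfm hfp hCm0 hCp0 hCm hCp h0 h1 s).const_mul (1 / (2 * π))).deriv,
    poissonExt_shift]
end part1

section part2

lemma key_bound {t lam S₀ M C : ℝ} (h0 : 0 < t) (h1 : t < 1) (hl0 : 0 < lam)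
    (hl1 : lam < 1) (hM : 0 < M) {g : ℝ → ℝ} (hg : Continuous g) (hC : ∀ y, |g y| ≤ C)
    (hdec : ∀ y, S₀ ≤ y → |g y| ≤ M * Real.exp (-lam * y)) {s : ℝ} (hs : S₀ + 1 ≤ s) :
    |∫ u : ℝ, stripPoissonKernel u t * g (u + s)| ≤
      (10 * C * Real.exp S₀ * Real.exp (-(1 - lam) * (S₀ + 1)) +
        M * (Real.exp 1 * (2 * π) + 10 * (2 / (1 - lam)))) * Real.exp (-lam * s) := by
  have hC0 : 0 ≤ C := (abs_nonneg _).trans (hC 0)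
  have hint : Integrable (fun u : ℝ => stripPoissonKernel u t * g (u + s)) :=
    kernel_mul_integrable h0 h1 hg hC s
  have habs : ∀ u : ℝ, |stripPoissonKernel u t * g (u + s)| = stripPoissonKernel u t * |g (u + s)| := by
    intro u; rw [abs_mul, abs_of_nonneg (kernel_nonneg h0 h1 u)]
  set Φ : ℝ → ℝ := fun u => stripPoissonKernel u t * |g (u + s)| with hΦ
  have hΦint : Integrable Φ := by
    have := hint.abs
    simpa only [habs] using this
  have step0 : |∫ u : ℝ, stripPoissonKernel u t * g (u + s)| ≤ ∫ u : ℝ, Φ u := by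
    have h := norm_integral_le_integral_norm (μ := volume) (f := fun u : ℝ => stripPoissonKernel u t * g (u + s))
    simpa only [Real.norm_eq_abs, habs] using h
  set c : ℝ := S₀ - s with hc
  have hc1 : c ≤ -1 := by rw [hc]; linarith
  have hsplit : ∫ u : ℝ, Φ u =
      (∫ u in Set.Iic c, Φ u) + ∫ u in Set.Ioi c, Φ u :=
    (intervalIntegral.integral_Iic_add_Ioi hΦint.integrableOn hΦint.integrableOn).symm
  -- piece 1
  have p1 : (∫ u in Set.Iic c, Φ u) ≤ 10 * C * Real.exp c := by
    have hmono : (∫ u in Set.Iic c, Φ u) ≤ ∫ u in Set.Iic c, 10 * C * Real.exp u := by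
      apply setIntegral_mono_on hΦint.integrableOn
        (((integrableOn_exp_Iic c).const_mul (10 * C)))
        measurableSet_Iic
      intro u hu
      have hu' : u ≤ -1 := le_trans (Set.mem_Iic.mp hu) hc1
      have habs1 : (1:ℝ) ≤ |u| := by rw [abs_of_nonpos (by linarith : u ≤ 0)]; linarith
      have hk := kernel_le_exp h0 h1 habs1
      rw [abs_of_nonpos (by linarith : u ≤ 0), neg_neg] at hk
      calc Φ u ≤ (10 * Real.exp u) * C := by
            apply mul_le_mul hk (hC _) (abs_nonneg _) (by positivity)
        _ = 10 * C * Real.exp u := by ring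
    calc (∫ u in Set.Iic c, Φ u) ≤ ∫ u in Set.Iic c, 10 * C * Real.exp u := hmono
      _ = 10 * C * Real.exp c := by
          rw [integral_const_mul, integral_exp_Iic]
  -- piece 2
  have p2 : (∫ u in Set.Ioi c, Φ u) ≤
      M * Real.exp (-lam * s) * (Real.exp 1 * (2 * π) + 10 * (2 / (1 - lam))) := by
    have hψint : Integrable (fun u => M * Real.exp (-lam * s) * psi t lam u) :=
      (psi_integrable h0 h1 hl1).const_mul _
    have hmono : (∫ u in Set.Ioi c, Φ u) ≤
        ∫ u in Set.Ioi c, M * Real.exp (-lam * s) * psi t lam u := by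
      apply setIntegral_mono_on hΦint.integrableOn hψint.integrableOn measurableSet_Ioi
      intro u hu
      have hS : S₀ ≤ u + s := by have := Set.mem_Ioi.mp hu; rw [hc] at this; linarith
      have hg2 : |g (u + s)| ≤ M * Real.exp (-lam * (u + s)) := hdec _ hS
      have hexp : Real.exp (-lam * (u + s)) =
          Real.exp (-lam * s) * Real.exp (-(lam * u)) := by
        rw [← Real.exp_add]; ring_nf
      calc Φ u ≤ stripPoissonKernel u t * (M * Real.exp (-lam * (u + s))) :=
            mul_le_mul_of_nonneg_left hg2 (kernel_nonneg h0 h1 u)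
        _ = M * Real.exp (-lam * s) * (stripPoissonKernel u t * Real.exp (-(lam * u))) := by
            rw [hexp]; ring
        _ ≤ M * Real.exp (-lam * s) * psi t lam u := by
            apply mul_le_mul_of_nonneg_left (kernel_exp_le_psi h0 h1 hl0 hl1 u)
            positivity
    have hrest : (∫ u in Set.Ioi c, M * Real.exp (-lam * s) * psi t lam u) ≤
        ∫ u : ℝ, M * Real.exp (-lam * s) * psi t lam u := by
      apply setIntegral_le_integral hψint
      filter_upwards with u
      have := psi_nonneg h0 h1 (lam := lam) u
      positivity
    have hval : (∫ u : ℝ, M * Real.exp (-lam * s) * psi t lam u) ≤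
        M * Real.exp (-lam * s) * (Real.exp 1 * (2 * π) + 10 * (2 / (1 - lam))) := by
      rw [integral_const_mul]
      apply mul_le_mul_of_nonneg_left (psi_integral_le h0 h1 hl1) (by positivity)
    exact hmono.trans (hrest.trans hval)
  -- combine piece 1 with decay
  have p1' : 10 * C * Real.exp c ≤
      10 * C * Real.exp S₀ * Real.exp (-(1 - lam) * (S₀ + 1)) * Real.exp (-lam * s) := by
    have hce : Real.exp c = Real.exp S₀ * (Real.exp (-(1 - lam) * s) * Real.exp (-lam * s)) := by
      rw [← Real.exp_add, ← Real.exp_add, hc]; ring_nf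
    have hmono : Real.exp (-(1 - lam) * s) ≤ Real.exp (-(1 - lam) * (S₀ + 1)) := by
      apply Real.exp_le_exp.2
      nlinarith
    calc 10 * C * Real.exp c
        = 10 * C * Real.exp S₀ * Real.exp (-(1 - lam) * s) * Real.exp (-lam * s) := by
          rw [hce]; ring
      _ ≤ 10 * C * Real.exp S₀ * Real.exp (-(1 - lam) * (S₀ + 1)) * Real.exp (-lam * s) := by
          have h10 : (0:ℝ) ≤ 10 * C * Real.exp S₀ := by positivity
          have := mul_le_mul_of_nonneg_left hmono h10
          exact mul_le_mul_of_nonneg_right this (Real.exp_pos _).le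
  calc |∫ u : ℝ, stripPoissonKernel u t * g (u + s)| ≤ ∫ u : ℝ, Φ u := step0
    _ = (∫ u in Set.Iic c, Φ u) + ∫ u in Set.Ioi c, Φ u := hsplit
    _ ≤ 10 * C * Real.exp S₀ * Real.exp (-(1 - lam) * (S₀ + 1)) * Real.exp (-lam * s) +
        M * Real.exp (-lam * s) * (Real.exp 1 * (2 * π) + 10 * (2 / (1 - lam))) := by
        exact add_le_add (p1.trans p1') p2
    _ = _ := by ring

end part2

/-- If `f₋, f₊` are `C¹` with `f₋, f₊, f₋′, f₊′` bounded, then `∂f/∂s` of the Poisson extension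
equals the Poisson extension of the derivatives; moreover if `f₋′, f₊′` decay like `M e^{−λs}`
for `s ≥ S₀` (with `0 < λ < 1`), then `∂f/∂s` decays like `M′ e^{−λs}` for `s ≥ S₀ + 1`,
uniformly in `t ∈ (0,1)`. -/
theorem poissonExt_deriv_s
    (fm fp : ℝ → ℝ) (hfm : ContDiff ℝ 1 fm) (hfp : ContDiff ℝ 1 fp)
    (hfmb : ∃ M : ℝ, ∀ s : ℝ, |fm s| ≤ M) (hfpb : ∃ M : ℝ, ∀ s : ℝ, |fp s| ≤ M)
    (hfmb' : ∃ M : ℝ, ∀ s : ℝ, |deriv fm s| ≤ M)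
    (hfpb' : ∃ M : ℝ, ∀ s : ℝ, |deriv fp s| ≤ M) :
    (∀ s t : ℝ, 0 < t → t < 1 →
      deriv (fun x : ℝ => poissonExt fm fp x t) s =
        poissonExt (deriv fm) (deriv fp) s t) ∧
    (∀ lam S₀ M : ℝ, 0 < lam → lam < 1 → 0 < M →
      (∀ s : ℝ, S₀ ≤ s → |deriv fm s| ≤ M * Real.exp (-lam * s)) →
      (∀ s : ℝ, S₀ ≤ s → |deriv fp s| ≤ M * Real.exp (-lam * s)) →
      ∃ M' : ℝ, 0 < M' ∧ ∀ s t : ℝ, S₀ + 1 ≤ s → 0 < t → t < 1 →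
        |deriv (fun x : ℝ => poissonExt fm fp x t) s| ≤ M' * Real.exp (-lam * s)) := by
  obtain ⟨Cm0, hCm0⟩ := hfmb
  obtain ⟨Cp0, hCp0⟩ := hfpb
  obtain ⟨Cm, hCm⟩ := hfmb'
  obtain ⟨Cp, hCp⟩ := hfpb'
  have hCmnn : 0 ≤ Cm := (abs_nonneg _).trans (hCm 0)
  have hCpnn : 0 ≤ Cp := (abs_nonneg _).trans (hCp 0)
  constructor
  · intro s t h0 h1
    exact deriv_poissonExt hfm hfp hCm0 hCp0 hCm hCp h0 h1 s
  · intro lam S₀ M hl0 hl1 hM hdm hdp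
    have hl' : 0 < 1 - lam := by linarith
    set E : ℝ := Real.exp 1 * (2 * π) + 10 * (2 / (1 - lam)) with hE
    have hE0 : 0 < E := by
      have h2 : 0 < 2 / (1 - lam) := div_pos two_pos hl'
      have h3 : 0 < Real.exp 1 * (2 * π) := by positivity
      have h4 : (0:ℝ) < 10 * (2 / (1 - lam)) := by linarith
      rw [hE]; linarith
    set Bm : ℝ := 10 * Cm * Real.exp S₀ * Real.exp (-(1 - lam) * (S₀ + 1)) + M * E with hBm
    set Bp : ℝ := 10 * Cp * Real.exp S₀ * Real.exp (-(1 - lam) * (S₀ + 1)) + M * E with hBp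
    have hBm0 : 0 ≤ Bm := by
      have := (Real.exp_pos S₀).le
      have := (Real.exp_pos (-(1 - lam) * (S₀ + 1))).le
      have := hE0.le
      positivity
    have hBp0 : 0 ≤ Bp := by positivity
    refine ⟨(1 / (2 * π)) * (Bm + Bp) + 1, ?_, ?_⟩
    · have hπ := Real.pi_pos
      positivity
    · intro s t hs h0 h1
      have h0' : 0 < 1 - t := by linarith
      have h1' : 1 - t < 1 := by linarith
      rw [deriv_poissonExt hfm hfp hCm0 hCp0 hCm hCp h0 h1 s, poissonExt_shift]
      have hintm : Integrable (fun u : ℝ => stripPoissonKernel u t * deriv fm (u + s)) :=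
        kernel_mul_integrable h0 h1 (hfm.continuous_deriv le_rfl) hCm s
      have hintp : Integrable (fun u : ℝ => stripPoissonKernel u (1 - t) * deriv fp (u + s)) :=
        kernel_mul_integrable h0' h1' (hfp.continuous_deriv le_rfl) hCp s
      have keym := key_bound h0 h1 hl0 hl1 hM (hfm.continuous_deriv le_rfl) hCm hdm hs
      have keyp := key_bound h0' h1' hl0 hl1 hM (hfp.continuous_deriv le_rfl) hCp hdp hs
      rw [integral_add hintm hintp]
      have hπ := Real.pi_pos
      have hc0 : 0 < 1 / (2 * π) := by positivity
      rw [abs_mul, abs_of_pos hc0]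
      have htr : |(∫ u : ℝ, stripPoissonKernel u t * deriv fm (u + s)) +
          ∫ u : ℝ, stripPoissonKernel u (1 - t) * deriv fp (u + s)| ≤
          (Bm + Bp) * Real.exp (-lam * s) := by
        calc |(∫ u : ℝ, stripPoissonKernel u t * deriv fm (u + s)) +
            ∫ u : ℝ, stripPoissonKernel u (1 - t) * deriv fp (u + s)| ≤
            |∫ u : ℝ, stripPoissonKernel u t * deriv fm (u + s)| +
            |∫ u : ℝ, stripPoissonKernel u (1 - t) * deriv fp (u + s)| := abs_add_le _ _
          _ ≤ Bm * Real.exp (-lam * s) + Bp * Real.exp (-lam * s) := add_le_add keym keyp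
          _ = (Bm + Bp) * Real.exp (-lam * s) := by ring
      calc 1 / (2 * π) * |(∫ u : ℝ, stripPoissonKernel u t * deriv fm (u + s)) +
            ∫ u : ℝ, stripPoissonKernel u (1 - t) * deriv fp (u + s)| ≤
          1 / (2 * π) * ((Bm + Bp) * Real.exp (-lam * s)) :=
            mul_le_mul_of_nonneg_left htr hc0.le
        _ ≤ (1 / (2 * π) * (Bm + Bp) + 1) * Real.exp (-lam * s) := by
            have := (Real.exp_pos (-lam * s)).le
            nlinarith
end

section
/- Let λ ∈ (0,1), C₋, C₊ ∈ ℝ, S₀ ∈ ℝ and M > 0, and let f₋, f₊ : ℝ → ℝ be bounded continuous functions with |f₋(s) − C₋| ≤ M e^{−λs} and |f₊(s) − C₊| ≤ M e^{−λs} for all s ≥ S₀. Then the Poisson extension f of (f₋, f₊) satisfies: there is M′ > 0 such that |f(s,t) − (C₋ + (C₊ − C₋) t)| ≤ M′ e^{−λs} for all s ≥ S₀ + 1 and all t ∈ (0,1). -/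
open Real MeasureTheory

open Set Filter Topology

-- Lemma E: integrability of exp(-a|x|)
lemma integrable_exp_neg_abs_mul {a : ℝ} (ha : 0 < a) :
    Integrable (fun x : ℝ => Real.exp (-a * |x|)) := by
  set f1 : ℝ → ℝ := (Ioi (0:ℝ)).indicator (fun x => Real.exp (-a * x)) with hf1
  set f2 : ℝ → ℝ := (Iio (0:ℝ)).indicator (fun x => Real.exp (a * x)) with hf2
  have h1 : Integrable f1 := by
    rw [hf1, integrable_indicator_iff measurableSet_Ioi]
    exact exp_neg_integrableOn_Ioi 0 ha
  have h2 : Integrable f2 := by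
    have : f2 = fun x => f1 (-x) := by
      funext x
      simp only [hf1, hf2, indicator]
      by_cases hx : x < 0
      · simp [hx, Set.mem_Ioi, Set.mem_Iio, neg_pos.mpr hx, mul_comm]
      · simp [hx, Set.mem_Ioi, Set.mem_Iio, not_lt.mp hx, not_lt_of_ge (not_lt.mp hx), neg_pos]
    rw [this]
    exact h1.comp_neg
  have heq : (fun x : ℝ => Real.exp (-a * |x|)) =ᵐ[volume] f1 + f2 := by
    have hsub : {x : ℝ | Real.exp (-a * |x|) ≠ (f1 + f2) x} ⊆ {0} := by
      intro x hx
      simp only [Set.mem_setOf_eq, Pi.add_apply, hf1, hf2, indicator] at hx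
      by_contra h0
      rcases lt_trichotomy x 0 with h | h | h
      · apply hx
        simp [Set.mem_Ioi, Set.mem_Iio, h, not_lt.mpr h.le, abs_of_neg h]
      · exact h0 h
      · apply hx
        simp [Set.mem_Ioi, Set.mem_Iio, h, not_lt.mpr h.le, abs_of_pos h]
    exact ae_iff.mpr (measure_mono_null hsub volume_singleton)
  exact ((h1.add h2).congr heq.symm)


section Kernel

variable {t : ℝ}

lemma pk_sin_pos (ht0 : 0 < t) (ht1 : t < 1) : 0 < Real.sin (π * t) :=
  Real.sin_pos_of_pos_of_lt_pi (by positivity) (by nlinarith [Real.pi_pos])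

lemma pk_sin_le_one (t : ℝ) : Real.sin (π * t) ≤ 1 := Real.sin_le_one _

lemma pk_cos_lt_one (ht0 : 0 < t) (ht1 : t < 1) : Real.cos (π * t) < 1 := by
  have h := pk_sin_pos ht0 ht1
  nlinarith [Real.sin_sq_add_cos_sq (π * t), Real.cos_le_one (π * t)]

lemma pk_denom_pos (ht0 : 0 < t) (ht1 : t < 1) (u : ℝ) :
    0 < Real.cosh u - Real.cos (π * t) := by
  nlinarith [Real.one_le_cosh u, pk_cos_lt_one ht0 ht1]

lemma pk_nonneg (ht0 : 0 < t) (ht1 : t < 1) (u : ℝ) : 0 ≤ stripPoissonKernel u t :=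
  div_nonneg (pk_sin_pos ht0 ht1).le (pk_denom_pos ht0 ht1 u).le

lemma pk_continuous (ht0 : 0 < t) (ht1 : t < 1) :
    Continuous (fun u => stripPoissonKernel u t) :=
  continuous_const.div (Real.continuous_cosh.sub continuous_const)
    (fun u => (pk_denom_pos ht0 ht1 u).ne')

/-- antiderivative of `1/(cosh x - cos (π t))` -/
noncomputable def pkAnti (t x : ℝ) : ℝ :=
  (2 / Real.sin (π * t)) * Real.arctan ((Real.exp x - Real.cos (π * t)) / Real.sin (π * t))

lemma pk_hasDerivAt (ht0 : 0 < t) (ht1 : t < 1) (x : ℝ) :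
    HasDerivAt (pkAnti t) (1 / (Real.cosh x - Real.cos (π * t))) x := by
  have hst : 0 < Real.sin (π * t) := pk_sin_pos ht0 ht1
  have h1 : HasDerivAt (fun x => (Real.exp x - Real.cos (π * t)) / Real.sin (π * t))
      (Real.exp x / Real.sin (π * t)) x :=
    ((Real.hasDerivAt_exp x).sub_const _).div_const _
  have h2 := (Real.hasDerivAt_arctan ((Real.exp x - Real.cos (π * t)) / Real.sin (π * t))).comp x h1
  have h3 := h2.const_mul (2 / Real.sin (π * t))
  refine h3.congr_deriv (Eq.symm ?_)
  have hd := pk_denom_pos ht0 ht1 x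
  have hpyth : Real.sin (π * t) ^ 2 + Real.cos (π * t) ^ 2 = 1 := Real.sin_sq_add_cos_sq _
  have hex : (0:ℝ) < Real.exp x := Real.exp_pos x
  have hcosh : Real.cosh x = (Real.exp x + (Real.exp x)⁻¹) / 2 := by
    rw [Real.cosh_eq, Real.exp_neg]
  rw [hcosh] at hd ⊢
  have hq : 0 < 1 + ((Real.exp x - Real.cos (π * t)) / Real.sin (π * t)) ^ 2 := by positivity
  have hq' : (0:ℝ) < 1 - 2 * Real.exp x * Real.cos (π * t) + Real.exp x ^ 2 := by
    nlinarith [hpyth, sq_nonneg (Real.exp x - Real.cos (π * t))]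
  rw [div_eq_iff hd.ne', div_mul_eq_mul_div, div_mul_eq_mul_div, mul_div_assoc]
  field_simp
  linear_combination hpyth

end Kernel

section Kernel2
variable {t : ℝ}

lemma pk_tendsto_atTop (ht0 : 0 < t) (ht1 : t < 1) :
    Tendsto (pkAnti t) atTop (𝓝 ((2 / Real.sin (π * t)) * (π / 2))) := by
  apply Tendsto.const_mul
  have h : Tendsto (fun x => (Real.exp x - Real.cos (π * t)) / Real.sin (π * t)) atTop atTop := by
    apply Tendsto.atTop_div_const (pk_sin_pos ht0 ht1)
    simpa [sub_eq_add_neg] using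
      tendsto_atTop_add_const_right atTop (-Real.cos (π * t)) Real.tendsto_exp_atTop
  exact (Real.tendsto_arctan_atTop.mono_right nhdsWithin_le_nhds).comp h

lemma pk_tendsto_atBot (ht0 : 0 < t) (ht1 : t < 1) :
    Tendsto (pkAnti t) atBot
      (𝓝 ((2 / Real.sin (π * t)) *
        Real.arctan ((0 - Real.cos (π * t)) / Real.sin (π * t)))) := by
  apply Tendsto.const_mul
  apply (Real.continuous_arctan.tendsto _).comp
  exact (Real.tendsto_exp_atBot.sub_const _).div_const _

lemma pk_le (ht0 : 0 < t) (ht1 : t < 1) (u : ℝ) :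
    stripPoissonKernel u t ≤ (4 / (1 - Real.cos (π * t))) * Real.exp (-1 * |u|) := by
  have hd := pk_denom_pos ht0 ht1 u
  have hct := pk_cos_lt_one ht0 ht1
  have hst1 := pk_sin_le_one t
  have h1 : ((1 - Real.cos (π * t)) / 2) * Real.cosh u ≤ Real.cosh u - Real.cos (π * t) := by
    nlinarith [Real.one_le_cosh u, Real.neg_one_le_cos (π * t)]
  have h2 : Real.exp |u| ≤ 2 * Real.cosh u := by
    rw [Real.cosh_eq]
    rcases abs_cases u with ⟨h, _⟩ | ⟨h, _⟩ <;> rw [h] <;>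
      nlinarith [Real.exp_pos u, Real.exp_pos (-u)]
  have hprod : 1 / 2 ≤ Real.exp (-1 * |u|) * Real.cosh u := by
    have he : Real.exp (-1 * |u|) * Real.exp |u| = 1 := by
      rw [← Real.exp_add]; simp
    nlinarith [Real.exp_pos (-1 * |u|)]
  have hq : (4 / (1 - Real.cos (π * t))) * (1 - Real.cos (π * t)) = 4 :=
    div_mul_cancel₀ 4 (by linarith)
  rw [stripPoissonKernel, div_le_iff₀ hd]
  have hkey : (4 / (1 - Real.cos (π * t))) * Real.exp (-1 * |u|) *
      (Real.cosh u - Real.cos (π * t)) ≥ 1 := by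
    have he := Real.exp_pos (-1 * |u|)
    have h4 : (0:ℝ) < 4 / (1 - Real.cos (π * t)) := div_pos (by norm_num) (by linarith)
    calc (4 / (1 - Real.cos (π * t))) * Real.exp (-1 * |u|) *
          (Real.cosh u - Real.cos (π * t))
        ≥ (4 / (1 - Real.cos (π * t))) * Real.exp (-1 * |u|) *
          (((1 - Real.cos (π * t)) / 2) * Real.cosh u) := by
          exact mul_le_mul_of_nonneg_left h1 (mul_pos h4 he).le
      _ = (4 / (1 - Real.cos (π * t))) * (1 - Real.cos (π * t)) / 2 *
          (Real.exp (-1 * |u|) * Real.cosh u) := by ring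
      _ ≥ 4 / 2 * (1 / 2) := by rw [hq]; nlinarith
      _ = 1 := by norm_num
  nlinarith [hkey]

lemma pk_integrable (ht0 : 0 < t) (ht1 : t < 1) :
    Integrable (fun u => stripPoissonKernel u t) := by
  apply Integrable.mono' ((integrable_exp_neg_abs_mul one_pos).const_mul
    (4 / (1 - Real.cos (π * t))))
  · exact (pk_continuous ht0 ht1).aestronglyMeasurable
  · refine ae_of_all _ fun u => ?_
    rw [Real.norm_eq_abs, abs_of_nonneg (pk_nonneg ht0 ht1 u)]
    exact pk_le ht0 ht1 u


lemma pk_inv_integrable (ht0 : 0 < t) (ht1 : t < 1) :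
    Integrable (fun u => 1 / (Real.cosh u - Real.cos (π * t))) := by
  have h := (pk_integrable ht0 ht1).div_const (Real.sin (π * t))
  refine h.congr (ae_of_all _ fun u => ?_)
  simp only [stripPoissonKernel]
  rw [div_right_comm, div_self (pk_sin_pos ht0 ht1).ne']

lemma pk_arctan_id (ht0 : 0 < t) (ht1 : t < 1) :
    Real.arctan (Real.cos (π * t) / Real.sin (π * t)) = π / 2 - π * t := by
  have h : Real.cos (π * t) / Real.sin (π * t) = Real.tan (π / 2 - π * t) := by
    rw [Real.tan_pi_div_two_sub, Real.tan_eq_sin_div_cos, inv_div]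
  rw [h, Real.arctan_tan (by nlinarith [Real.pi_pos]) (by nlinarith [Real.pi_pos])]

lemma pk_integral (ht0 : 0 < t) (ht1 : t < 1) :
    ∫ u, stripPoissonKernel u t = 2 * π * (1 - t) := by
  have h := integral_of_hasDerivAt_of_tendsto (pk_hasDerivAt ht0 ht1)
    (pk_inv_integrable ht0 ht1) (pk_tendsto_atBot ht0 ht1) (pk_tendsto_atTop ht0 ht1)
  have harc : Real.arctan ((0 - Real.cos (π * t)) / Real.sin (π * t)) = -(π / 2 - π * t) := by
    rw [zero_sub, neg_div, Real.arctan_neg, pk_arctan_id ht0 ht1]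
  have hst := pk_sin_pos ht0 ht1
  calc ∫ u, stripPoissonKernel u t
      = ∫ u, Real.sin (π * t) * (1 / (Real.cosh u - Real.cos (π * t))) := by
        congr 1; funext u; simp only [stripPoissonKernel]; ring
    _ = Real.sin (π * t) * ∫ u, 1 / (Real.cosh u - Real.cos (π * t)) :=
        integral_const_mul _ _
    _ = 2 * π * (1 - t) := by
        rw [h, harc]
        field_simp
        ring

end Kernel2

section Weighted

variable {t lam : ℝ}

lemma two_cosh_eq (u : ℝ) : 2 * Real.cosh u = Real.exp |u| + Real.exp (-|u|) := by
  rw [Real.cosh_eq]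
  rcases abs_cases u with ⟨h, _⟩ | ⟨h, _⟩ <;> rw [h] <;> ring_nf

lemma cosh_ge_of_abs_ge_one {u : ℝ} (hu : 1 ≤ |u|) : (3:ℝ)/2 ≤ Real.cosh u := by
  have h2 := two_cosh_eq u
  have hx : Real.exp 1 ≤ Real.exp |u| := Real.exp_le_exp.mpr hu
  have he : (2.7182818283 : ℝ) < Real.exp 1 := Real.exp_one_gt_d9
  have hpos : 0 < Real.exp (-|u|) := Real.exp_pos _
  have hinv : Real.exp |u| * Real.exp (-|u|) = 1 := by
    rw [← Real.exp_add]; simp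
  nlinarith [Real.exp_pos |u|]

lemma pk_weighted_integrable (hlam0 : 0 < lam) (hlam1 : lam < 1)
    (ht0 : 0 < t) (ht1 : t < 1) :
    Integrable (fun u => stripPoissonKernel u t * Real.exp (-lam * u)) := by
  apply Integrable.mono' ((integrable_exp_neg_abs_mul (by linarith : (0:ℝ) < 1 - lam)).const_mul
    (4 / (1 - Real.cos (π * t))))
  · exact ((pk_continuous ht0 ht1).mul
      (Real.continuous_exp.comp (continuous_const.mul continuous_id))).aestronglyMeasurable
  · refine ae_of_all _ fun u => ?_
    rw [Real.norm_eq_abs, abs_mul, abs_of_nonneg (pk_nonneg ht0 ht1 u),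
      abs_of_nonneg (Real.exp_pos _).le]
    have h1 := pk_le ht0 ht1 u
    have h2 : Real.exp (-1 * |u|) * Real.exp (-lam * u) ≤ Real.exp (-(1 - lam) * |u|) := by
      rw [← Real.exp_add, Real.exp_le_exp]
      have : -lam * u ≤ lam * |u| := by
        nlinarith [neg_abs_le u, abs_nonneg u]
      nlinarith
    have h4 : (0:ℝ) < 4 / (1 - Real.cos (π * t)) :=
      div_pos (by norm_num) (by linarith [pk_cos_lt_one ht0 ht1])
    calc stripPoissonKernel u t * Real.exp (-lam * u)
        ≤ (4 / (1 - Real.cos (π * t))) * Real.exp (-1 * |u|) * Real.exp (-lam * u) :=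
          mul_le_mul_of_nonneg_right h1 (Real.exp_pos _).le
      _ = (4 / (1 - Real.cos (π * t))) * (Real.exp (-1 * |u|) * Real.exp (-lam * u)) := by ring
      _ ≤ 4 / (1 - Real.cos (π * t)) * Real.exp (-(1 - lam) * |u|) :=
          mul_le_mul_of_nonneg_left h2 h4.le

lemma pk_weighted_pointwise (hlam0 : 0 < lam) (hlam1 : lam < 1)
    (ht0 : 0 < t) (ht1 : t < 1) (u : ℝ) :
    stripPoissonKernel u t * Real.exp (-lam * u) ≤
      Real.exp lam * stripPoissonKernel u t + 6 * Real.exp (-(1 - lam) * |u|) := by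
  have hP := pk_nonneg ht0 ht1 u
  rcases le_or_gt |u| 1 with h | h
  · have h1 : Real.exp (-lam * u) ≤ Real.exp lam := by
      rw [Real.exp_le_exp]
      nlinarith [neg_abs_le u, abs_nonneg u]
    nlinarith [Real.exp_pos (-(1 - lam) * |u|), mul_le_mul_of_nonneg_left h1 hP]
  · -- |u| ≥ 1 : use the tail bound P ≤ 6 exp(-|u|)
    have hcosh := cosh_ge_of_abs_ge_one h.le
    have hd := pk_denom_pos ht0 ht1 u
    have hct := pk_cos_lt_one ht0 ht1
    have hst1 := pk_sin_le_one t
    have hP6 : stripPoissonKernel u t ≤ 6 * Real.exp (-1 * |u|) := by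
      have hup : Real.exp |u| ≤ 2 * Real.cosh u := by
        nlinarith [two_cosh_eq u, Real.exp_pos (-|u|)]
      have h13 : Real.cosh u / 3 ≤ Real.cosh u - Real.cos (π * t) := by
        nlinarith [Real.cos_le_one (π * t)]
      have hprod : 1 / 2 ≤ Real.exp (-1 * |u|) * Real.cosh u := by
        have he : Real.exp (-1 * |u|) * Real.exp |u| = 1 := by
          rw [← Real.exp_add]; simp
        nlinarith [Real.exp_pos (-1 * |u|)]
      rw [stripPoissonKernel, div_le_iff₀ hd]
      nlinarith [Real.exp_pos (-1 * |u|), Real.cosh_pos u]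
    have h2 : Real.exp (-1 * |u|) * Real.exp (-lam * u) ≤ Real.exp (-(1 - lam) * |u|) := by
      rw [← Real.exp_add, Real.exp_le_exp]
      have : -lam * u ≤ lam * |u| := by
        nlinarith [neg_abs_le u, abs_nonneg u]
      nlinarith
    calc stripPoissonKernel u t * Real.exp (-lam * u)
        ≤ 6 * Real.exp (-1 * |u|) * Real.exp (-lam * u) :=
          mul_le_mul_of_nonneg_right hP6 (Real.exp_pos _).le
      _ = 6 * (Real.exp (-1 * |u|) * Real.exp (-lam * u)) := by ring
      _ ≤ 6 * Real.exp (-(1 - lam) * |u|) := by nlinarith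
      _ ≤ Real.exp lam * stripPoissonKernel u t + 6 * Real.exp (-(1 - lam) * |u|) := by
          nlinarith [mul_nonneg (Real.exp_pos lam).le hP]

end Weighted

section Mass
variable {t lam : ℝ}

lemma pk_weighted_bound (hlam0 : 0 < lam) (hlam1 : lam < 1)
    (ht0 : 0 < t) (ht1 : t < 1) :
    ∫ u, stripPoissonKernel u t * Real.exp (-lam * u) ≤
      2 * π * Real.exp lam + 6 * ∫ x : ℝ, Real.exp (-(1 - lam) * |x|) := by
  have hJint : Integrable (fun x : ℝ => Real.exp (-(1 - lam) * |x|)) :=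
    integrable_exp_neg_abs_mul (by linarith)
  have hmono : ∫ u, stripPoissonKernel u t * Real.exp (-lam * u) ≤
      ∫ u, (Real.exp lam * stripPoissonKernel u t + 6 * Real.exp (-(1 - lam) * |u|)) := by
    refine integral_mono (pk_weighted_integrable hlam0 hlam1 ht0 ht1)
      (((pk_integrable ht0 ht1).const_mul _).add (hJint.const_mul _))
      (fun u => pk_weighted_pointwise hlam0 hlam1 ht0 ht1 u)
  refine hmono.trans ?_
  rw [integral_add ((pk_integrable ht0 ht1).const_mul _) (hJint.const_mul _),
    integral_const_mul, integral_const_mul, pk_integral ht0 ht1]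
  have hJ0 : 0 ≤ ∫ x : ℝ, Real.exp (-(1 - lam) * |x|) :=
    integral_nonneg (fun x => (Real.exp_pos _).le)
  nlinarith [Real.exp_pos lam, Real.pi_pos, mul_pos (Real.exp_pos lam) Real.pi_pos]

lemma pk_weighted_nonneg (ht0 : 0 < t) (ht1 : t < 1) :
    0 ≤ ∫ u, stripPoissonKernel u t * Real.exp (-lam * u) :=
  integral_nonneg fun u => mul_nonneg (pk_nonneg ht0 ht1 u) (Real.exp_pos _).le

end Mass

section Shift
variable {t lam : ℝ}

lemma pk_shift_weighted (hlam0 : 0 < lam) (hlam1 : lam < 1)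
    (ht0 : 0 < t) (ht1 : t < 1) (s : ℝ) :
    Integrable (fun σ => stripPoissonKernel (σ - s) t * Real.exp (-lam * σ)) ∧
    ∫ σ, stripPoissonKernel (σ - s) t * Real.exp (-lam * σ) =
      (∫ u, stripPoissonKernel u t * Real.exp (-lam * u)) * Real.exp (-lam * s) := by
  have hint : Integrable
      (fun u => stripPoissonKernel u t * Real.exp (-lam * u) * Real.exp (-lam * s)) :=
    (pk_weighted_integrable hlam0 hlam1 ht0 ht1).mul_const _
  have hfun : ∀ σ : ℝ,
      stripPoissonKernel (σ - s) t * Real.exp (-lam * (σ - s)) * Real.exp (-lam * s)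
      = stripPoissonKernel (σ - s) t * Real.exp (-lam * σ) := by
    intro σ
    rw [mul_assoc, ← Real.exp_add, show -lam * (σ - s) + -lam * s = -lam * σ by ring]
  constructor
  · exact (hint.comp_sub_right s).congr (ae_of_all _ fun σ => hfun σ)
  · calc ∫ σ, stripPoissonKernel (σ - s) t * Real.exp (-lam * σ)
        = ∫ σ, stripPoissonKernel (σ - s) t * Real.exp (-lam * (σ - s)) * Real.exp (-lam * s) := by
          congr 1; funext σ; rw [hfun σ]
      _ = ∫ u, stripPoissonKernel u t * Real.exp (-lam * u) * Real.exp (-lam * s) :=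
          integral_sub_right_eq_self
            (fun u => stripPoissonKernel u t * Real.exp (-lam * u) * Real.exp (-lam * s)) s
      _ = (∫ u, stripPoissonKernel u t * Real.exp (-lam * u)) * Real.exp (-lam * s) :=
          integral_mul_const _ _

end Shift


/-- If bounded continuous boundary data `f₋, f₊` converge exponentially (with rate `0 < λ < 1`)
to constants `C₋, C₊` as `s → +∞`, then the Poisson extension converges exponentially to the
affine function `C₋ + (C₊ − C₋) t` on the strip. -/
theorem poissonExt_exp_convergence
    (lam Cm Cp S₀ M : ℝ) (hlam0 : 0 < lam) (hlam1 : lam < 1) (hM : 0 < M)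
    (fm fp : ℝ → ℝ) (hfmc : Continuous fm) (hfpc : Continuous fp)
    (hfmb : ∃ K : ℝ, ∀ s : ℝ, |fm s| ≤ K) (hfpb : ∃ K : ℝ, ∀ s : ℝ, |fp s| ≤ K)
    (hdm : ∀ s : ℝ, S₀ ≤ s → |fm s - Cm| ≤ M * Real.exp (-lam * s))
    (hdp : ∀ s : ℝ, S₀ ≤ s → |fp s - Cp| ≤ M * Real.exp (-lam * s)) :
    ∃ M' : ℝ, 0 < M' ∧ ∀ s t : ℝ, S₀ + 1 ≤ s → 0 < t → t < 1 →
      |poissonExt fm fp s t - (Cm + (Cp - Cm) * t)| ≤ M' * Real.exp (-lam * s) := by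
  obtain ⟨Km, hKm⟩ := hfmb
  obtain ⟨Kp, hKp⟩ := hfpb
  have hKm0 : 0 ≤ Km := le_trans (abs_nonneg _) (hKm 0)
  have hKp0 : 0 ≤ Kp := le_trans (abs_nonneg _) (hKp 0)
  have hpi := Real.pi_pos
  set Bm : ℝ := M + (Km + |Cm|) * Real.exp (lam * S₀) with hBmdef
  set Bp : ℝ := M + (Kp + |Cp|) * Real.exp (lam * S₀) with hBpdef
  have hBm0 : 0 < Bm := by positivity
  have hBp0 : 0 < Bp := by positivity
  have hglobal : ∀ (g : ℝ → ℝ) (C K : ℝ), (∀ σ, |g σ| ≤ K) →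
      (∀ σ, S₀ ≤ σ → |g σ - C| ≤ M * Real.exp (-lam * σ)) →
      ∀ σ : ℝ, |g σ - C| ≤ (M + (K + |C|) * Real.exp (lam * S₀)) * Real.exp (-lam * σ) := by
    intro g C K hK hd σ
    rcases le_or_gt S₀ σ with h | h
    · refine (hd σ h).trans ?_
      have hK0 : 0 ≤ K := le_trans (abs_nonneg _) (hK 0)
      have h1 : (0:ℝ) ≤ (K + |C|) * Real.exp (lam * S₀) := by positivity
      nlinarith [Real.exp_pos (-lam * σ)]
    · have hK0 : 0 ≤ K := le_trans (abs_nonneg _) (hK 0)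
      have h1 : |g σ - C| ≤ K + |C| :=
        (abs_sub _ _).trans (add_le_add (hK σ) le_rfl)
      have h2 : (1:ℝ) ≤ Real.exp (lam * S₀) * Real.exp (-lam * σ) := by
        rw [← Real.exp_add, show lam * S₀ + -lam * σ = lam * (S₀ - σ) by ring]
        exact Real.one_le_exp (by nlinarith)
      calc |g σ - C| ≤ (K + |C|) * 1 := by linarith [h1]
        _ ≤ (K + |C|) * (Real.exp (lam * S₀) * Real.exp (-lam * σ)) :=
            mul_le_mul_of_nonneg_left h2 (by positivity)
        _ ≤ (M + (K + |C|) * Real.exp (lam * S₀)) * Real.exp (-lam * σ) := by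
            nlinarith [Real.exp_pos (-lam * σ), mul_pos hM (Real.exp_pos (-lam * σ))]
  have hgm : ∀ σ : ℝ, |fm σ - Cm| ≤ Bm * Real.exp (-lam * σ) :=
    hglobal fm Cm Km hKm hdm
  have hgp : ∀ σ : ℝ, |fp σ - Cp| ≤ Bp * Real.exp (-lam * σ) :=
    hglobal fp Cp Kp hKp hdp
  set J : ℝ := ∫ x : ℝ, Real.exp (-(1 - lam) * |x|) with hJdef
  have hJ0 : 0 ≤ J := integral_nonneg fun x => (Real.exp_pos _).le
  set A : ℝ := 2 * π * Real.exp lam + 6 * J with hAdef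
  have hA0 : 0 < A := by
    have := Real.exp_pos lam
    nlinarith
  refine ⟨(Bm + Bp) * A / (2 * π), by positivity, ?_⟩
  intro s t hs ht0 ht1
  have ht1' : 0 < 1 - t := by linarith
  have ht1'' : (1:ℝ) - t < 1 := by linarith
  have hP1 : Integrable (fun σ => stripPoissonKernel (σ - s) t) :=
    (pk_integrable ht0 ht1).comp_sub_right s
  have hP2 : Integrable (fun σ => stripPoissonKernel (σ - s) (1 - t)) :=
    (pk_integrable ht1' ht1'').comp_sub_right s
  have hcont1 : Continuous (fun σ : ℝ => stripPoissonKernel (σ - s) t) :=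
    (pk_continuous ht0 ht1).comp (continuous_id.sub continuous_const)
  have hcont2 : Continuous (fun σ : ℝ => stripPoissonKernel (σ - s) (1 - t)) :=
    (pk_continuous ht1' ht1'').comp (continuous_id.sub continuous_const)
  have hPmul : ∀ (τ : ℝ) (hτ0 : 0 < τ) (hτ1 : τ < 1) (g : ℝ → ℝ) (K : ℝ),
      Continuous g → (∀ σ, |g σ| ≤ K) →
      Integrable (fun σ => stripPoissonKernel (σ - s) τ * g σ) := by
    intro τ hτ0 hτ1 g K hgc hgK
    apply Integrable.mono' (((pk_integrable hτ0 hτ1).comp_sub_right s).const_mul K)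
    · exact (((pk_continuous hτ0 hτ1).comp
        (continuous_id.sub continuous_const)).mul hgc).aestronglyMeasurable
    · refine ae_of_all _ fun σ => ?_
      rw [Real.norm_eq_abs, abs_mul, abs_of_nonneg (pk_nonneg hτ0 hτ1 _)]
      calc stripPoissonKernel (σ - s) τ * |g σ| ≤ stripPoissonKernel (σ - s) τ * K :=
            mul_le_mul_of_nonneg_left (hgK σ) (pk_nonneg hτ0 hτ1 _)
        _ = K * stripPoissonKernel (σ - s) τ := by ring
  have hP1fm : Integrable (fun σ => stripPoissonKernel (σ - s) t * fm σ) :=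
    hPmul t ht0 ht1 fm Km hfmc hKm
  have hP2fp : Integrable (fun σ => stripPoissonKernel (σ - s) (1 - t) * fp σ) :=
    hPmul (1 - t) ht1' ht1'' fp Kp hfpc hKp
  have hW1 := pk_shift_weighted hlam0 hlam1 ht0 ht1 s
  have hW2 := pk_shift_weighted hlam0 hlam1 ht1' ht1'' s
  have hIP1 : ∫ σ, stripPoissonKernel (σ - s) t = 2 * π * (1 - t) := by
    rw [integral_sub_right_eq_self (fun u => stripPoissonKernel u t) s]
    exact pk_integral ht0 ht1
  have hIP2 : ∫ σ, stripPoissonKernel (σ - s) (1 - t) = 2 * π * t := by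
    rw [integral_sub_right_eq_self (fun u => stripPoissonKernel u (1 - t)) s,
      pk_integral ht1' ht1'']
    ring
  have hFint : Integrable (fun σ => stripPoissonKernel (σ - s) t * (fm σ - Cm) +
      stripPoissonKernel (σ - s) (1 - t) * (fp σ - Cp)) := by
    refine (((hP1fm.sub (hP1.mul_const Cm)).add
      (hP2fp.sub (hP2.mul_const Cp)))).congr (ae_of_all _ fun σ => by
        simp only [Pi.add_apply, Pi.sub_apply]; ring)
  have heq : poissonExt fm fp s t - (Cm + (Cp - Cm) * t) =
      (1 / (2 * π)) * ∫ σ, (stripPoissonKernel (σ - s) t * (fm σ - Cm) +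
        stripPoissonKernel (σ - s) (1 - t) * (fp σ - Cp)) := by
    have e1 : (fun σ => stripPoissonKernel (σ - s) t * (fm σ - Cm) +
        stripPoissonKernel (σ - s) (1 - t) * (fp σ - Cp))
        = fun σ => (stripPoissonKernel (σ - s) t * fm σ + stripPoissonKernel (σ - s) (1 - t) * fp σ)
          - (stripPoissonKernel (σ - s) t * Cm + stripPoissonKernel (σ - s) (1 - t) * Cp) := by
      funext σ; ring
    have hsplit : ∫ σ, (stripPoissonKernel (σ - s) t * (fm σ - Cm) +
        stripPoissonKernel (σ - s) (1 - t) * (fp σ - Cp))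
        = (∫ σ, (stripPoissonKernel (σ - s) t * fm σ + stripPoissonKernel (σ - s) (1 - t) * fp σ))
          - (Cm * (2 * π * (1 - t)) + Cp * (2 * π * t)) := by
      have i3 : Integrable (fun σ => stripPoissonKernel (σ - s) t * Cm) := hP1.mul_const Cm
      have i4 : Integrable (fun σ => stripPoissonKernel (σ - s) (1 - t) * Cp) := hP2.mul_const Cp
      have i1 : Integrable (fun σ => stripPoissonKernel (σ - s) t * fm σ +
          stripPoissonKernel (σ - s) (1 - t) * fp σ) := hP1fm.add hP2fp
      have i2 : Integrable (fun σ => stripPoissonKernel (σ - s) t * Cm +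
          stripPoissonKernel (σ - s) (1 - t) * Cp) := i3.add i4
      rw [e1, integral_sub i1 i2, integral_add i3 i4, integral_mul_const,
        integral_mul_const, hIP1, hIP2]
      ring
    rw [hsplit, poissonExt]
    field_simp
    ring
  rw [heq, abs_mul, abs_of_pos (show (0:ℝ) < 1 / (2 * π) by positivity)]
  have hGint : Integrable (fun σ =>
      Bm * (stripPoissonKernel (σ - s) t * Real.exp (-lam * σ)) +
      Bp * (stripPoissonKernel (σ - s) (1 - t) * Real.exp (-lam * σ))) :=
    (hW1.1.const_mul Bm).add (hW2.1.const_mul Bp)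
  have hpt : ∀ σ : ℝ, |stripPoissonKernel (σ - s) t * (fm σ - Cm) +
      stripPoissonKernel (σ - s) (1 - t) * (fp σ - Cp)| ≤
      Bm * (stripPoissonKernel (σ - s) t * Real.exp (-lam * σ)) +
      Bp * (stripPoissonKernel (σ - s) (1 - t) * Real.exp (-lam * σ)) := by
    intro σ
    have k1 := pk_nonneg ht0 ht1 (σ - s)
    have k2 := pk_nonneg ht1' ht1'' (σ - s)
    calc |stripPoissonKernel (σ - s) t * (fm σ - Cm) +
        stripPoissonKernel (σ - s) (1 - t) * (fp σ - Cp)|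
        ≤ |stripPoissonKernel (σ - s) t * (fm σ - Cm)| +
          |stripPoissonKernel (σ - s) (1 - t) * (fp σ - Cp)| := abs_add_le _ _
      _ = stripPoissonKernel (σ - s) t * |fm σ - Cm| +
          stripPoissonKernel (σ - s) (1 - t) * |fp σ - Cp| := by
          rw [abs_mul, abs_mul, abs_of_nonneg k1, abs_of_nonneg k2]
      _ ≤ stripPoissonKernel (σ - s) t * (Bm * Real.exp (-lam * σ)) +
          stripPoissonKernel (σ - s) (1 - t) * (Bp * Real.exp (-lam * σ)) :=
          add_le_add (mul_le_mul_of_nonneg_left (hgm σ) k1)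
            (mul_le_mul_of_nonneg_left (hgp σ) k2)
      _ = Bm * (stripPoissonKernel (σ - s) t * Real.exp (-lam * σ)) +
          Bp * (stripPoissonKernel (σ - s) (1 - t) * Real.exp (-lam * σ)) := by ring
  have habs : |∫ σ, (stripPoissonKernel (σ - s) t * (fm σ - Cm) +
      stripPoissonKernel (σ - s) (1 - t) * (fp σ - Cp))| ≤
      ∫ σ, |stripPoissonKernel (σ - s) t * (fm σ - Cm) +
      stripPoissonKernel (σ - s) (1 - t) * (fp σ - Cp)| := by
    simpa [Real.norm_eq_abs] using norm_integral_le_integral_norm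
      (fun σ => stripPoissonKernel (σ - s) t * (fm σ - Cm) +
        stripPoissonKernel (σ - s) (1 - t) * (fp σ - Cp))
  have hmono : ∫ σ, |stripPoissonKernel (σ - s) t * (fm σ - Cm) +
      stripPoissonKernel (σ - s) (1 - t) * (fp σ - Cp)| ≤
      ∫ σ, (Bm * (stripPoissonKernel (σ - s) t * Real.exp (-lam * σ)) +
      Bp * (stripPoissonKernel (σ - s) (1 - t) * Real.exp (-lam * σ))) :=
    integral_mono hFint.abs hGint hpt
  have hIG : ∫ σ, (Bm * (stripPoissonKernel (σ - s) t * Real.exp (-lam * σ)) +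
      Bp * (stripPoissonKernel (σ - s) (1 - t) * Real.exp (-lam * σ)))
      = Bm * ((∫ u, stripPoissonKernel u t * Real.exp (-lam * u)) * Real.exp (-lam * s)) +
        Bp * ((∫ u, stripPoissonKernel u (1 - t) * Real.exp (-lam * u)) * Real.exp (-lam * s)) := by
    have g1 : Integrable (fun σ => Bm * (stripPoissonKernel (σ - s) t * Real.exp (-lam * σ))) :=
      hW1.1.const_mul Bm
    have g2 : Integrable
        (fun σ => Bp * (stripPoissonKernel (σ - s) (1 - t) * Real.exp (-lam * σ))) :=
      hW2.1.const_mul Bp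
    rw [integral_add g1 g2, integral_const_mul, integral_const_mul, hW1.2, hW2.2]
  have hb1 : ∫ u, stripPoissonKernel u t * Real.exp (-lam * u) ≤ A := by
    rw [hAdef, hJdef]; exact pk_weighted_bound hlam0 hlam1 ht0 ht1
  have hb2 : ∫ u, stripPoissonKernel u (1 - t) * Real.exp (-lam * u) ≤ A := by
    rw [hAdef, hJdef]; exact pk_weighted_bound hlam0 hlam1 ht1' ht1''
  have hn1 : 0 ≤ ∫ u, stripPoissonKernel u t * Real.exp (-lam * u) :=
    pk_weighted_nonneg ht0 ht1
  have hn2 : 0 ≤ ∫ u, stripPoissonKernel u (1 - t) * Real.exp (-lam * u) :=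
    pk_weighted_nonneg ht1' ht1''
  have he0 : (0:ℝ) < Real.exp (-lam * s) := Real.exp_pos _
  have hfinal : |∫ σ, (stripPoissonKernel (σ - s) t * (fm σ - Cm) +
      stripPoissonKernel (σ - s) (1 - t) * (fp σ - Cp))| ≤
      (Bm + Bp) * A * Real.exp (-lam * s) := by
    refine (habs.trans hmono).trans ?_
    rw [hIG]
    nlinarith [mul_le_mul_of_nonneg_right (mul_le_mul_of_nonneg_left hb1 hBm0.le) he0.le,
      mul_le_mul_of_nonneg_right (mul_le_mul_of_nonneg_left hb2 hBp0.le) he0.le]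
  calc (1 / (2 * π)) * |∫ σ, (stripPoissonKernel (σ - s) t * (fm σ - Cm) +
      stripPoissonKernel (σ - s) (1 - t) * (fp σ - Cp))|
      ≤ (1 / (2 * π)) * ((Bm + Bp) * A * Real.exp (-lam * s)) :=
        mul_le_mul_of_nonneg_left hfinal (by positivity)
    _ = (Bm + Bp) * A / (2 * π) * Real.exp (-lam * s) := by ring
end

section
/- Let λ ∈ (0,2), C₋, C₊ ∈ ℝ, S₀ ∈ ℝ and M > 0, and let f₋, f₊ : ℝ → ℝ be bounded continuous functions with |f₋(s) − C₋| ≤ M e^{−λs} and |f₊(s) − C₊| ≤ M e^{−λs} for all s ≥ S₀. Then the Poisson extension f of (f₋, f₊) is differentiable in t along the midline t = 1/2, and there is M′ > 0 such that |∂f/∂t (s, 1/2) − (C₊ − C₋)| ≤ M′ e^{−λs} for all s ≥ S₀ + 1. -/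
open Real MeasureTheory

open Set Metric Filter Topology


lemma exp_abs_le_two_cosh (x : ℝ) : Real.exp |x| ≤ 2 * Real.cosh x := by
  rw [Real.cosh_eq]
  rcases abs_cases x with ⟨h, _⟩ | ⟨h, _⟩ <;> rw [h] <;>
    nlinarith [Real.exp_pos x, Real.exp_pos (-x)]

lemma sech_le (x : ℝ) : (Real.cosh x)⁻¹ ≤ 2 * Real.exp (-|x|) := by
  have h : Real.exp |x| ≤ 2 * Real.cosh x := exp_abs_le_two_cosh x
  have h2 : (0:ℝ) < Real.exp |x| := Real.exp_pos _
  have h3 : (0:ℝ) < Real.cosh x := Real.cosh_pos x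
  rw [Real.exp_neg]
  calc (Real.cosh x)⁻¹ = 2 * (2 * Real.cosh x)⁻¹ := by field_simp
    _ ≤ 2 * (Real.exp |x|)⁻¹ := by gcongr

lemma integrable_exp_neg_mul_abs {a : ℝ} (ha : 0 < a) :
    Integrable fun x : ℝ => Real.exp (-(a * |x|)) := by
  rw [← integrableOn_univ, ← Set.Iio_union_Ici (a := (0:ℝ)), integrableOn_union,
    integrableOn_Ici_iff_integrableOn_Ioi]
  have hIoi : IntegrableOn (fun x : ℝ => Real.exp (-(a * |x|))) (Ioi 0) := by
    refine (exp_neg_integrableOn_Ioi 0 ha).congr_fun ?_ measurableSet_Ioi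
    intro x hx
    simp [abs_of_pos (mem_Ioi.1 hx), neg_mul]
  constructor
  · rw [← (Measure.measurePreserving_neg (volume : Measure ℝ)).integrableOn_comp_preimage
      (Homeomorph.neg ℝ).measurableEmbedding]
    simpa [Function.comp_def, abs_neg] using hIoi
  · exact hIoi

lemma continuous_sech : Continuous fun x : ℝ => (Real.cosh x)⁻¹ :=
  Real.continuous_cosh.inv₀ fun x => (Real.cosh_pos x).ne'

lemma integrable_sech : Integrable fun x : ℝ => (Real.cosh x)⁻¹ := by
  refine Integrable.mono' ((integrable_exp_neg_mul_abs one_pos).const_mul 2)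
    continuous_sech.aestronglyMeasurable ?_
  filter_upwards with x
  rw [Real.norm_eq_abs, abs_of_pos (inv_pos.2 (Real.cosh_pos x))]
  simpa using sech_le x

lemma sech_sq_le (x : ℝ) : ((Real.cosh x) ^ 2)⁻¹ ≤ 4 * Real.exp (-(2 * |x|)) := by
  have h0 : (0:ℝ) ≤ (Real.cosh x)⁻¹ := (inv_pos.2 (Real.cosh_pos x)).le
  calc ((Real.cosh x) ^ 2)⁻¹ = ((Real.cosh x)⁻¹) ^ 2 := (inv_pow _ _).symm
    _ ≤ (2 * Real.exp (-|x|)) ^ 2 := by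
        apply pow_le_pow_left₀ h0 (sech_le x)
    _ = 4 * Real.exp (-(2 * |x|)) := by
        rw [show -(2 * |x|) = -|x| + -|x| by ring, Real.exp_add]; ring

lemma continuous_sech_sq : Continuous fun x : ℝ => ((Real.cosh x) ^ 2)⁻¹ :=
  (Real.continuous_cosh.pow 2).inv₀ fun x => (pow_pos (Real.cosh_pos x) 2).ne'

lemma integrable_sech_sq : Integrable fun x : ℝ => ((Real.cosh x) ^ 2)⁻¹ := by
  refine Integrable.mono' integrable_sech continuous_sech_sq.aestronglyMeasurable ?_
  filter_upwards with x
  rw [Real.norm_eq_abs, abs_of_pos (inv_pos.2 (pow_pos (Real.cosh_pos x) 2))]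
  have h1 : (1:ℝ) ≤ Real.cosh x := Real.one_le_cosh x
  have : Real.cosh x ≤ Real.cosh x ^ 2 := by nlinarith
  exact inv_anti₀ (Real.cosh_pos x) this


lemma hasDerivAt_tanh (x : ℝ) : HasDerivAt Real.tanh (((Real.cosh x) ^ 2)⁻¹) x := by
  have h := (Real.hasDerivAt_sinh x).div (Real.hasDerivAt_cosh x) (Real.cosh_pos x).ne'
  have heq : (fun x => Real.sinh x / Real.cosh x) = Real.tanh := by
    funext y; rw [Real.tanh_eq_sinh_div_cosh]
  rw [show Real.sinh / Real.cosh = (fun x => Real.sinh x / Real.cosh x) from rfl, heq] at h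
  refine h.congr_deriv ?_
  have h1 : Real.cosh x ^ 2 - Real.sinh x ^ 2 = 1 := Real.cosh_sq_sub_sinh_sq x
  have h2 : (0:ℝ) < Real.cosh x ^ 2 := pow_pos (Real.cosh_pos x) 2
  rw [show Real.cosh x * Real.cosh x - Real.sinh x * Real.sinh x = 1 by nlinarith, one_div]

lemma tendsto_exp_neg_two_mul : Tendsto (fun x : ℝ => Real.exp (-(2 * x))) atTop (𝓝 0) := by
  apply Real.tendsto_exp_atBot.comp
  have h : Tendsto (fun x : ℝ => 2 * x) atTop atTop :=
    Tendsto.const_mul_atTop two_pos tendsto_id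
  exact tendsto_neg_atBot_iff.2 h

lemma tanh_eq (x : ℝ) :
    Real.tanh x = (1 - Real.exp (-(2 * x))) / (1 + Real.exp (-(2 * x))) := by
  rw [Real.tanh_eq_sinh_div_cosh, Real.sinh_eq, Real.cosh_eq]
  have h1 : Real.exp x * Real.exp (-x) = 1 := by rw [← Real.exp_add]; simp
  have h2 : Real.exp (-(2 * x)) = Real.exp (-x) * Real.exp (-x) := by
    rw [← Real.exp_add]; ring_nf
  have h3 : (0:ℝ) < Real.exp x := Real.exp_pos x
  have h4 : (0:ℝ) < Real.exp (-x) := Real.exp_pos _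
  have h5 : (0:ℝ) < 1 + Real.exp (-(2 * x)) := by positivity
  rw [h2]
  field_simp
  nlinarith [h1]

lemma tendsto_tanh_atTop : Tendsto Real.tanh atTop (𝓝 1) := by
  have h : Tendsto (fun x : ℝ => (1 - Real.exp (-(2 * x))) / (1 + Real.exp (-(2 * x))))
      atTop (𝓝 ((1 - 0) / (1 + 0))) :=
    ((tendsto_const_nhds.sub tendsto_exp_neg_two_mul).div
      (tendsto_const_nhds.add tendsto_exp_neg_two_mul) (by norm_num))
  simp only [sub_zero, add_zero, div_one] at h
  exact h.congr fun x => (_root_.tanh_eq x).symm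

lemma tendsto_tanh_atBot : Tendsto Real.tanh atBot (𝓝 (-1)) := by
  have h : Tendsto (fun x : ℝ => -Real.tanh (-x)) atBot (𝓝 (-1)) :=
    (tendsto_tanh_atTop.comp tendsto_neg_atBot_atTop).neg
  exact h.congr fun x => by rw [Real.tanh_neg, neg_neg]

lemma integral_sech_sq : ∫ x : ℝ, ((Real.cosh x) ^ 2)⁻¹ = 2 := by
  rw [← intervalIntegral.integral_Iic_add_Ioi (b := (0:ℝ)) integrable_sech_sq.integrableOn
    integrable_sech_sq.integrableOn]
  have h1 : ∫ x in Ioi (0:ℝ), ((Real.cosh x) ^ 2)⁻¹ = 1 - Real.tanh 0 :=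
    integral_Ioi_of_hasDerivAt_of_tendsto' (fun x _ => hasDerivAt_tanh x)
      integrable_sech_sq.integrableOn tendsto_tanh_atTop
  have h2 : ∫ x in Iic (0:ℝ), ((Real.cosh x) ^ 2)⁻¹ = Real.tanh 0 - (-1) :=
    integral_Iic_of_hasDerivAt_of_tendsto' (fun x _ => hasDerivAt_tanh x)
      integrable_sech_sq.integrableOn tendsto_tanh_atBot
  rw [h1, h2, Real.tanh_zero]
  norm_num

noncomputable def PK' (x t : ℝ) : ℝ :=
  π * (Real.cos (π * t) * Real.cosh x - 1) / (Real.cosh x - Real.cos (π * t)) ^ 2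

lemma hasDerivAt_poissonKernel (x t : ℝ) (h : Real.cos (π * t) < Real.cosh x) :
    HasDerivAt (fun t => stripPoissonKernel x t) (PK' x t) t := by
  have hden : Real.cosh x - Real.cos (π * t) ≠ 0 := (sub_pos.2 h).ne'
  have h1 : HasDerivAt (fun t : ℝ => Real.sin (π * t)) (Real.cos (π * t) * π) t := by
    simpa [Function.comp_def] using (Real.hasDerivAt_sin (π * t)).comp t ((hasDerivAt_id t).const_mul π)
  have h2 : HasDerivAt (fun t : ℝ => Real.cosh x - Real.cos (π * t)) (Real.sin (π * t) * π) t := by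
    have hc : HasDerivAt (fun t : ℝ => Real.cos (π * t)) (-Real.sin (π * t) * π) t := by
      simpa [Function.comp_def] using (Real.hasDerivAt_cos (π * t)).comp t ((hasDerivAt_id t).const_mul π)
    simpa using hc.const_sub (Real.cosh x)
  have h3 := h1.div h2 hden
  have hpy := Real.sin_sq_add_cos_sq (π * t)
  have hnum : π * (Real.cos (π * t) * Real.cosh x - 1) =
      Real.cos (π * t) * π * (Real.cosh x - Real.cos (π * t)) -
        Real.sin (π * t) * (Real.sin (π * t) * π) := by
    linear_combination π * hpy
  have hEq : PK' x t = (Real.cos (π * t) * π * (Real.cosh x - Real.cos (π * t)) -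
      Real.sin (π * t) * (Real.sin (π * t) * π)) / (Real.cosh x - Real.cos (π * t)) ^ 2 := by
    unfold PK'
    rw [hnum]
  rw [hEq]
  exact h3

lemma PK'_half (x : ℝ) : PK' x (1 / 2) = -π * ((Real.cosh x) ^ 2)⁻¹ := by
  unfold PK'
  rw [show π * (1 / 2 : ℝ) = π / 2 by ring, Real.cos_pi_div_two]
  have : Real.cosh x ≠ 0 := (Real.cosh_pos x).ne'
  field_simp
  ring

lemma poissonKernel_half (x : ℝ) : stripPoissonKernel x (1 / 2) = (Real.cosh x)⁻¹ := by
  unfold stripPoissonKernel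
  rw [show π * (1 / 2 : ℝ) = π / 2 by ring, Real.cos_pi_div_two, Real.sin_pi_div_two]
  rw [sub_zero, one_div]

lemma abs_cos_le_half {t : ℝ} (ht : |t - 1 / 2| < 1 / 8) : |Real.cos (π * t)| ≤ 1 / 2 := by
  have h1 : Real.cos (π * t) = Real.sin (π / 2 - π * t) := (Real.sin_pi_div_two_sub _).symm
  rw [h1]
  have h2 : |Real.sin (π / 2 - π * t)| ≤ |π / 2 - π * t| := Real.abs_sin_le_abs
  have h3 : |π / 2 - π * t| = π * |t - 1 / 2| := by
    rw [show π / 2 - π * t = π * -(t - 1 / 2) by ring, abs_mul, abs_neg,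
      abs_of_pos Real.pi_pos]
  have h4 : π ≤ 4 := Real.pi_le_four
  have h5 : (0:ℝ) ≤ |t - 1 / 2| := abs_nonneg _
  calc |Real.sin (π / 2 - π * t)| ≤ π * |t - 1 / 2| := by rw [← h3]; exact h2
    _ ≤ 4 * (1 / 8) := by apply mul_le_mul h4 ht.le h5 (by norm_num)
    _ = 1 / 2 := by norm_num

lemma kernel_den_lb {t : ℝ} (x : ℝ) (h : |Real.cos (π * t)| ≤ 1 / 2) :
    Real.cosh x / 2 ≤ Real.cosh x - Real.cos (π * t) := by
  have h1 : (1:ℝ) ≤ Real.cosh x := Real.one_le_cosh x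
  have h2 := abs_le.1 h
  linarith [h2.1, h2.2]

lemma kernel_den_pos {t : ℝ} (x : ℝ) (h : |Real.cos (π * t)| ≤ 1 / 2) :
    0 < Real.cosh x - Real.cos (π * t) := by
  have := kernel_den_lb x h
  have := Real.cosh_pos x
  linarith

lemma PK'_bound {t : ℝ} (x : ℝ) (h : |Real.cos (π * t)| ≤ 1 / 2) :
    |PK' x t| ≤ 8 * π * (Real.cosh x)⁻¹ := by
  have hc : (1:ℝ) ≤ Real.cosh x := Real.one_le_cosh x
  have hc0 : (0:ℝ) < Real.cosh x := Real.cosh_pos x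
  have hd := kernel_den_lb x h
  have hd0 := kernel_den_pos x h
  unfold PK'
  rw [abs_div, abs_of_pos (pow_pos hd0 2)]
  have habs := abs_le.1 h
  have hnum : |π * (Real.cos (π * t) * Real.cosh x - 1)| ≤ 2 * π * Real.cosh x := by
    rw [abs_mul, abs_of_pos Real.pi_pos]
    have h1 : |Real.cos (π * t) * Real.cosh x - 1| ≤ Real.cosh x + 1 := by
      rw [abs_sub_le_iff]
      constructor <;> nlinarith [habs.1, habs.2]
    nlinarith [Real.pi_pos]
  have hden : Real.cosh x ^ 2 / 4 ≤ (Real.cosh x - Real.cos (π * t)) ^ 2 := by nlinarith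
  calc |π * (Real.cos (π * t) * Real.cosh x - 1)| / (Real.cosh x - Real.cos (π * t)) ^ 2
      ≤ (2 * π * Real.cosh x) / (Real.cosh x ^ 2 / 4) :=
        div_le_div₀ (by positivity) hnum (by positivity) hden
    _ = 8 * π * (Real.cosh x)⁻¹ := by field_simp; ring

lemma continuous_kernel (s t : ℝ) (h : |Real.cos (π * t)| ≤ 1 / 2) :
    Continuous fun σ : ℝ => stripPoissonKernel (σ - s) t := by
  unfold stripPoissonKernel
  exact continuous_const.div
    ((Real.continuous_cosh.comp (continuous_id.sub continuous_const)).sub continuous_const)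
    fun σ => (kernel_den_pos (σ - s) h).ne'

lemma continuous_PK' (s t : ℝ) (h : |Real.cos (π * t)| ≤ 1 / 2) :
    Continuous fun σ : ℝ => PK' (σ - s) t := by
  unfold PK'
  apply Continuous.div
  · exact continuous_const.mul
      (((continuous_const.mul (Real.continuous_cosh.comp (continuous_id.sub continuous_const))).sub continuous_const))
  · exact ((Real.continuous_cosh.comp (continuous_id.sub continuous_const)).sub
      continuous_const).pow 2
  · exact fun σ => (pow_pos (kernel_den_pos (σ - s) h) 2).ne'

lemma poissonExt_hasDerivAt (fm fp : ℝ → ℝ) (hfmc : Continuous fm) (hfpc : Continuous fp)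
    (Km Kp : ℝ) (hKm : ∀ x, |fm x| ≤ Km) (hKp : ∀ x, |fp x| ≤ Kp) (s : ℝ) :
    HasDerivAt (fun t => poissonExt fm fp s t)
      ((1 / (2 * π)) * ∫ σ : ℝ, π * ((Real.cosh (σ - s)) ^ 2)⁻¹ * (fp σ - fm σ)) (1 / 2) := by
  have hKm0 : 0 ≤ Km := le_trans (abs_nonneg _) (hKm 0)
  have hKp0 : 0 ≤ Kp := le_trans (abs_nonneg _) (hKp 0)
  set F : ℝ → ℝ → ℝ := fun t σ =>
    stripPoissonKernel (σ - s) t * fm σ + stripPoissonKernel (σ - s) (1 - t) * fp σ with hF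
  set F' : ℝ → ℝ → ℝ := fun t σ =>
    PK' (σ - s) t * fm σ + (-PK' (σ - s) (1 - t)) * fp σ with hF'
  have hball : ∀ t ∈ Metric.ball (1/2 : ℝ) (1/8),
      |Real.cos (π * t)| ≤ 1/2 ∧ |Real.cos (π * (1 - t))| ≤ 1/2 := by
    intro t ht
    rw [Metric.mem_ball, Real.dist_eq] at ht
    refine ⟨abs_cos_le_half ht, abs_cos_le_half ?_⟩
    rw [show (1 : ℝ) - t - 1/2 = -(t - 1/2) by ring, abs_neg]
    exact ht
  have hhalf : (1/2 : ℝ) ∈ Metric.ball (1/2 : ℝ) (1/8) := Metric.mem_ball_self (by norm_num)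
  have hmeas : ∀ᶠ t in 𝓝 (1/2 : ℝ), AEStronglyMeasurable (F t) volume := by
    filter_upwards [Metric.ball_mem_nhds (1/2 : ℝ) (by norm_num : (0:ℝ) < 1/8)] with t ht
    obtain ⟨h1, h2⟩ := hball t ht
    exact (((continuous_kernel s t h1).mul hfmc).add
      ((continuous_kernel s (1 - t) h2).mul hfpc)).aestronglyMeasurable
  have hint : Integrable (F (1/2)) volume := by
    have hcont : Continuous (F (1/2)) := by
      obtain ⟨h1, h2⟩ := hball _ hhalf
      exact ((continuous_kernel s _ h1).mul hfmc).add ((continuous_kernel s _ h2).mul hfpc)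
    refine Integrable.mono' ((integrable_sech.comp_sub_right s).mul_const (Km + Kp))
      hcont.aestronglyMeasurable ?_
    filter_upwards with σ
    have h0 : (0:ℝ) ≤ (Real.cosh (σ - s))⁻¹ := (inv_pos.2 (Real.cosh_pos _)).le
    have e2 : stripPoissonKernel (σ - s) (1 - 1/2) = (Real.cosh (σ - s))⁻¹ := by
      rw [show (1:ℝ) - 1/2 = 1/2 by norm_num]; exact poissonKernel_half _
    simp only [hF, Real.norm_eq_abs, poissonKernel_half, e2]
    refine (abs_add_le _ _).trans ?_
    rw [abs_mul, abs_mul, abs_of_nonneg h0]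
    nlinarith [hKm σ, hKp σ, abs_nonneg (fm σ), abs_nonneg (fp σ)]
  have hmeas' : AEStronglyMeasurable (F' (1/2)) volume := by
    obtain ⟨h1, h2⟩ := hball _ hhalf
    exact (((continuous_PK' s _ h1).mul hfmc).add
      (((continuous_PK' s _ h2).neg).mul hfpc)).aestronglyMeasurable
  have hbnd : ∀ᵐ σ ∂(volume : Measure ℝ), ∀ t ∈ Metric.ball (1/2 : ℝ) (1/8),
      ‖F' t σ‖ ≤ 8 * π * (Real.cosh (σ - s))⁻¹ * (Km + Kp) := by
    filter_upwards with σ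
    intro t ht
    obtain ⟨h1, h2⟩ := hball t ht
    have b1 := PK'_bound (σ - s) h1
    have b2 := PK'_bound (σ - s) h2
    have h0 : (0:ℝ) ≤ 8 * π * (Real.cosh (σ - s))⁻¹ := by positivity
    simp only [hF', Real.norm_eq_abs]
    calc |PK' (σ - s) t * fm σ + (-PK' (σ - s) (1 - t)) * fp σ|
        ≤ |PK' (σ - s) t| * |fm σ| + |PK' (σ - s) (1 - t)| * |fp σ| := by
          refine (abs_add_le _ _).trans ?_
          rw [abs_mul, abs_mul, abs_neg]
      _ ≤ (8 * π * (Real.cosh (σ - s))⁻¹) * Km + (8 * π * (Real.cosh (σ - s))⁻¹) * Kp :=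
          add_le_add (mul_le_mul b1 (hKm σ) (abs_nonneg _) h0)
            (mul_le_mul b2 (hKp σ) (abs_nonneg _) h0)
      _ = 8 * π * (Real.cosh (σ - s))⁻¹ * (Km + Kp) := by ring
  have hbint : Integrable (fun σ : ℝ => 8 * π * (Real.cosh (σ - s))⁻¹ * (Km + Kp)) volume := by
    exact ((integrable_sech.comp_sub_right s).const_mul (8 * π)).mul_const (Km + Kp)
  have hdiff : ∀ᵐ σ ∂(volume : Measure ℝ), ∀ t ∈ Metric.ball (1/2 : ℝ) (1/8),
      HasDerivAt (fun t => F t σ) (F' t σ) t := by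
    filter_upwards with σ
    intro t ht
    obtain ⟨h1, h2⟩ := hball t ht
    have hc : (1:ℝ) ≤ Real.cosh (σ - s) := Real.one_le_cosh _
    have hlt1 : Real.cos (π * t) < Real.cosh (σ - s) :=
      lt_of_le_of_lt (le_trans (le_abs_self _) h1) (by linarith)
    have hlt2 : Real.cos (π * (1 - t)) < Real.cosh (σ - s) :=
      lt_of_le_of_lt (le_trans (le_abs_self _) h2) (by linarith)
    have d1 := (hasDerivAt_poissonKernel (σ - s) t hlt1).mul_const (fm σ)
    have dinner : HasDerivAt (fun t : ℝ => 1 - t) (-1) t := by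
      simpa using (hasDerivAt_id t).const_sub 1
    have d2 : HasDerivAt (fun t : ℝ => stripPoissonKernel (σ - s) (1 - t))
        (PK' (σ - s) (1 - t) * (-1)) t :=
      (hasDerivAt_poissonKernel (σ - s) (1 - t) hlt2).comp t dinner
    have d3 := d1.add (d2.mul_const (fp σ))
    have : PK' (σ - s) t * fm σ + PK' (σ - s) (1 - t) * (-1) * fp σ = F' t σ := by
      simp only [hF']; ring
    rw [this] at d3
    exact d3
  obtain ⟨-, hD⟩ := hasDerivAt_integral_of_dominated_loc_of_deriv_le
    (Metric.ball_mem_nhds (1/2 : ℝ) (by norm_num : (0:ℝ) < 1/8)) hmeas hint hmeas' hbnd hbint hdiff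
  have hEq : F' (1/2) = fun σ => π * ((Real.cosh (σ - s)) ^ 2)⁻¹ * (fp σ - fm σ) := by
    funext σ
    simp only [hF']
    rw [show (1:ℝ) - 1/2 = 1/2 by norm_num, PK'_half]
    ring
  rw [hEq] at hD
  exact hD.const_mul (1 / (2 * π))

set_option maxHeartbeats 1000000 in
/-- If bounded continuous boundary data `f₋, f₊` converge exponentially (with rate `0 < λ < 2`)
to constants `C₋, C₊`, then the Poisson extension is differentiable in `t` along the midline
`t = 1/2`, and `∂f/∂t(s,1/2)` converges exponentially to `C₊ − C₋` as `s → +∞`. -/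
theorem poissonExt_deriv_t_midline
    (lam Cm Cp S₀ M : ℝ) (hlam0 : 0 < lam) (hlam2 : lam < 2) (hM : 0 < M)
    (fm fp : ℝ → ℝ) (hfmc : Continuous fm) (hfpc : Continuous fp)
    (hfmb : ∃ K : ℝ, ∀ s : ℝ, |fm s| ≤ K) (hfpb : ∃ K : ℝ, ∀ s : ℝ, |fp s| ≤ K)
    (hdm : ∀ s : ℝ, S₀ ≤ s → |fm s - Cm| ≤ M * Real.exp (-lam * s))
    (hdp : ∀ s : ℝ, S₀ ≤ s → |fp s - Cp| ≤ M * Real.exp (-lam * s)) :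
    (∀ s : ℝ, DifferentiableAt ℝ (fun t : ℝ => poissonExt fm fp s t) (1 / 2)) ∧
    ∃ M' : ℝ, 0 < M' ∧ ∀ s : ℝ, S₀ + 1 ≤ s →
      |deriv (fun t : ℝ => poissonExt fm fp s t) (1 / 2) - (Cp - Cm)|
        ≤ M' * Real.exp (-lam * s) := by
  obtain ⟨Km, hKm⟩ := hfmb
  obtain ⟨Kp, hKp⟩ := hfpb
  have hmain := fun s => poissonExt_hasDerivAt fm fp hfmc hfpc Km Kp hKm hKp s
  refine ⟨fun s => (hmain s).differentiableAt, ?_⟩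
  have hKm0 : 0 ≤ Km := le_trans (abs_nonneg _) (hKm 0)
  have hKp0 : 0 ≤ Kp := le_trans (abs_nonneg _) (hKp 0)
  set C : ℝ := Cp - Cm with hC
  set B : ℝ := Km + Kp + |C| with hB
  have hB0 : 0 ≤ B := by positivity
  set A : ℝ := 8 * M + 4 * B * Real.exp (lam * S₀) with hA
  have hA0 : 0 < A := by positivity
  have h2lam : 0 < 2 - lam := by linarith
  set J : ℝ := ∫ u : ℝ, Real.exp (-((2 - lam) * |u|)) with hJ
  have hJ0 : 0 ≤ J := integral_nonneg fun u => (Real.exp_pos _).le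
  refine ⟨(1/2) * A * J + 1, by positivity, ?_⟩
  intro s hs
  have hs0 : S₀ ≤ s := by linarith
  rw [(hmain s).deriv]
  -- notation
  set I1 : ℝ → ℝ := fun σ => ((Real.cosh (σ - s)) ^ 2)⁻¹ with hI1def
  have hI1cont : Continuous I1 := continuous_sech_sq.comp (continuous_id.sub continuous_const)
  have hI1pos : ∀ σ, 0 < I1 σ := fun σ => inv_pos.2 (pow_pos (Real.cosh_pos _) 2)
  have hI1int : Integrable I1 := integrable_sech_sq.comp_sub_right s
  have hI1 : ∫ σ, I1 σ = 2 := by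
    rw [hI1def]
    rw [integral_sub_right_eq_self (fun x => ((Real.cosh x) ^ 2)⁻¹) s]
    exact integral_sech_sq
  have hgint : Integrable (fun σ => I1 σ * (fp σ - fm σ)) := by
    refine Integrable.mono' (hI1int.mul_const (Km + Kp))
      (hI1cont.mul (hfpc.sub hfmc)).aestronglyMeasurable ?_
    filter_upwards with σ
    rw [Real.norm_eq_abs, abs_mul, abs_of_pos (hI1pos σ)]
    have h1 : |fp σ - fm σ| ≤ Km + Kp := by
      have := abs_sub (fp σ) (fm σ)
      have := hKm σ; have := hKp σ
      linarith
    exact mul_le_mul_of_nonneg_left h1 (hI1pos σ).le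
  have hCint : Integrable (fun σ => I1 σ * C) := hI1int.mul_const C
  -- key algebraic rewrite
  have hπ : (π : ℝ) ≠ 0 := Real.pi_ne_zero
  have hstep : (1 / (2 * π)) * (∫ σ : ℝ, π * ((Real.cosh (σ - s)) ^ 2)⁻¹ * (fp σ - fm σ)) - C
      = (1/2) * ∫ σ : ℝ, I1 σ * ((fp σ - fm σ) - C) := by
    have e1 : (fun σ : ℝ => π * ((Real.cosh (σ - s)) ^ 2)⁻¹ * (fp σ - fm σ))
        = fun σ => π * (I1 σ * (fp σ - fm σ)) := by
      funext σ; rw [hI1def]; ring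
    rw [e1, integral_const_mul]
    have e2 : ∫ σ : ℝ, I1 σ * ((fp σ - fm σ) - C)
        = (∫ σ : ℝ, I1 σ * (fp σ - fm σ)) - ∫ σ : ℝ, I1 σ * C := by
      rw [← integral_sub hgint hCint]
      congr 1; funext σ; ring
    rw [e2, integral_mul_const, hI1]
    field_simp
  rw [hstep]
  -- pointwise bound
  have hptw : ∀ σ : ℝ, |I1 σ * ((fp σ - fm σ) - C)|
      ≤ Real.exp (-(lam * s)) * (A * Real.exp (-((2 - lam) * |σ - s|))) := by
    intro σ
    have hI1le : I1 σ ≤ 4 * Real.exp (-(2 * |σ - s|)) := sech_sq_le _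
    rw [abs_mul, abs_of_pos (hI1pos σ)]
    rcases le_or_gt S₀ σ with hσ | hσ
    · have hX : |(fp σ - fm σ) - C| ≤ 2 * M * Real.exp (-(lam * σ)) := by
        have h1 := hdm σ hσ
        have h2 := hdp σ hσ
        have e : (fp σ - fm σ) - C = (fp σ - Cp) - (fm σ - Cm) := by rw [hC]; ring
        rw [e]
        have h3 := abs_sub (fp σ - Cp) (fm σ - Cm)
        have e4 : -lam * σ = -(lam * σ) := by ring
        rw [e4] at h1 h2
        linarith
      have hexp : Real.exp (-(2 * |σ - s|)) * Real.exp (-(lam * σ))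
          ≤ Real.exp (-(lam * s)) * Real.exp (-((2 - lam) * |σ - s|)) := by
        rw [← Real.exp_add, ← Real.exp_add]
        apply Real.exp_le_exp.2
        have h1 : s - σ ≤ |σ - s| := by rw [abs_sub_comm]; exact le_abs_self _
        nlinarith [mul_le_mul_of_nonneg_left h1 hlam0.le]
      calc I1 σ * |(fp σ - fm σ) - C|
          ≤ (4 * Real.exp (-(2 * |σ - s|))) * (2 * M * Real.exp (-(lam * σ))) :=
            mul_le_mul hI1le hX (abs_nonneg _) (by positivity)
        _ = 8 * M * (Real.exp (-(2 * |σ - s|)) * Real.exp (-(lam * σ))) := by ring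
        _ ≤ 8 * M * (Real.exp (-(lam * s)) * Real.exp (-((2 - lam) * |σ - s|))) := by
            exact mul_le_mul_of_nonneg_left hexp (by positivity)
        _ = (8 * M) * Real.exp (-(lam * s)) * Real.exp (-((2 - lam) * |σ - s|)) := by ring
        _ ≤ A * Real.exp (-(lam * s)) * Real.exp (-((2 - lam) * |σ - s|)) := by
            have h8A : 8 * M ≤ A := by
              have hp : 0 ≤ 4 * B * Real.exp (lam * S₀) := by positivity
              rw [hA]; linarith
            have := mul_le_mul_of_nonneg_right (mul_le_mul_of_nonneg_right h8A
              (Real.exp_pos (-(lam * s))).le) (Real.exp_pos (-((2 - lam) * |σ - s|))).le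
            linarith
        _ = Real.exp (-(lam * s)) * (A * Real.exp (-((2 - lam) * |σ - s|))) := by ring
    · have hu : σ - s < 0 := by linarith
      have habsu : |σ - s| = s - σ := by rw [abs_of_neg hu]; ring
      have hX : |(fp σ - fm σ) - C| ≤ B := by
        have h1 := abs_sub (fp σ - fm σ) C
        have h2 := abs_sub (fp σ) (fm σ)
        have := hKm σ; have := hKp σ
        rw [hB]; linarith
      have key : Real.exp (-(2 * (s - σ)))
          ≤ Real.exp (-(lam * s) + lam * S₀ + -((2 - lam) * (s - σ))) := by
        apply Real.exp_le_exp.2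
        nlinarith [mul_le_mul_of_nonneg_left hσ.le hlam0.le]
      calc I1 σ * |(fp σ - fm σ) - C|
          ≤ (4 * Real.exp (-(2 * |σ - s|))) * B :=
            mul_le_mul hI1le hX (abs_nonneg _) (by positivity)
        _ = (4 * B) * Real.exp (-(2 * (s - σ))) := by rw [habsu]; ring
        _ ≤ (4 * B) * Real.exp (-(lam * s) + lam * S₀ + -((2 - lam) * (s - σ))) :=
            mul_le_mul_of_nonneg_left key (by positivity)
        _ = Real.exp (-(lam * s)) * ((4 * B * Real.exp (lam * S₀))
              * Real.exp (-((2 - lam) * (s - σ)))) := by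
            rw [Real.exp_add, Real.exp_add]; ring
        _ ≤ Real.exp (-(lam * s)) * (A * Real.exp (-((2 - lam) * (s - σ)))) := by
            have h4A : 4 * B * Real.exp (lam * S₀) ≤ A := by rw [hA]; linarith
            have h5 := mul_le_mul_of_nonneg_right h4A (Real.exp_pos (-((2 - lam) * (s - σ)))).le
            have := mul_le_mul_of_nonneg_left h5 (Real.exp_pos (-(lam * s))).le
            linarith [this]
        _ = Real.exp (-(lam * s)) * (A * Real.exp (-((2 - lam) * |σ - s|))) := by
            rw [habsu]
  -- bound integrable and its integral
  have hbint : Integrable (fun σ : ℝ =>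
      Real.exp (-(lam * s)) * (A * Real.exp (-((2 - lam) * |σ - s|)))) := by
    exact (((integrable_exp_neg_mul_abs h2lam).comp_sub_right s).const_mul A).const_mul
      (Real.exp (-(lam * s)))
  have hbval : (∫ σ : ℝ, Real.exp (-(lam * s)) * (A * Real.exp (-((2 - lam) * |σ - s|))))
      = Real.exp (-(lam * s)) * (A * J) := by
    rw [integral_const_mul, integral_const_mul, hJ,
      integral_sub_right_eq_self (fun u => Real.exp (-((2 - lam) * |u|))) s]
  -- conclude
  have h1 : |∫ σ : ℝ, I1 σ * ((fp σ - fm σ) - C)| ≤ ∫ σ : ℝ, |I1 σ * ((fp σ - fm σ) - C)| := by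
    simpa only [Real.norm_eq_abs] using
      norm_integral_le_integral_norm (fun σ : ℝ => I1 σ * ((fp σ - fm σ) - C)) (μ := volume)
  have h2 : (∫ σ : ℝ, |I1 σ * ((fp σ - fm σ) - C)|)
      ≤ ∫ σ : ℝ, Real.exp (-(lam * s)) * (A * Real.exp (-((2 - lam) * |σ - s|))) := by
    refine integral_mono_of_nonneg ?_ hbint ?_
    · filter_upwards with σ; exact abs_nonneg _
    · filter_upwards with σ; exact hptw σ
  rw [abs_mul, abs_of_pos (by norm_num : (0:ℝ) < 1/2)]
  have hE : Real.exp (-lam * s) = Real.exp (-(lam * s)) := by ring_nf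
  rw [hE]
  have hfin : (1/2) * |∫ σ : ℝ, I1 σ * ((fp σ - fm σ) - C)|
      ≤ (1/2) * (Real.exp (-(lam * s)) * (A * J)) := by
    rw [← hbval]
    have := h1.trans h2
    linarith
  have hlast : (1/2) * (Real.exp (-(lam * s)) * (A * J))
      ≤ ((1/2) * A * J + 1) * Real.exp (-(lam * s)) := by
    have he : ((1/2) * A * J + 1) * Real.exp (-(lam * s))
        - (1/2) * (Real.exp (-(lam * s)) * (A * J)) = Real.exp (-(lam * s)) := by ring
    linarith [Real.exp_pos (-(lam * s))]
  linarith
end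

section
/- Let h : S̄ → ℂ be continuous on the closed strip S̄ = {s + it : 0 ≤ t ≤ 1}, holomorphic on the open strip S, and bounded. If h(s + i·0) ∈ ℝ and h(s + i·1) ∈ ℝ for every s ∈ ℝ, then h is constant, and this constant is real. -/
open Complex Set Filter

/-- The open unit strip `{s + it : s ∈ ℝ, 0 < t < 1}` in `ℂ`. -/
def openStrip : Set ℂ := {z : ℂ | 0 < z.im ∧ z.im < 1}

/-- The closed unit strip `{s + it : s ∈ ℝ, 0 ≤ t ≤ 1}` in `ℂ`. -/
def closedStrip : Set ℂ := {z : ℂ | 0 ≤ z.im ∧ z.im ≤ 1}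

lemma openStrip_eq : openStrip = Complex.im ⁻¹' Ioo 0 1 := by
  ext z; simp [openStrip, Ioo]

lemma closedStrip_eq : closedStrip = Complex.im ⁻¹' Icc 0 1 := by
  ext z; simp [closedStrip, Icc]

lemma closure_openStrip : closure openStrip = closedStrip := by
  rw [openStrip_eq, closedStrip_eq, Complex.closure_preimage_im, closure_Ioo one_ne_zero.symm]

/-- PL step: Im h ≤ 0 on the closed strip. -/
lemma im_nonpos_of_boundary
    (h : ℂ → ℂ)
    (hcont : ContinuousOn h closedStrip)
    (hhol : DifferentiableOn ℂ h openStrip)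
    (hbdd : ∃ K : ℝ, ∀ z ∈ closedStrip, ‖h z‖ ≤ K)
    (hb0 : ∀ s : ℝ, (h (s : ℂ)).im = 0)
    (hb1 : ∀ s : ℝ, (h (s + Complex.I)).im = 0) :
    ∀ z ∈ closedStrip, (h z).im ≤ 0 := by
  obtain ⟨K, hK⟩ := hbdd
  set f : ℂ → ℂ := fun z => Complex.exp (-Complex.I * h z) with hf
  have hnorm : ∀ z, ‖f z‖ = Real.exp ((h z).im) := by
    intro z
    rw [hf]
    simp [Complex.norm_exp]
  have hsub : Complex.im ⁻¹' Ioo 0 1 = openStrip := openStrip_eq.symm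
  have hfd : DiffContOnCl ℂ f (Complex.im ⁻¹' Ioo 0 1) := by
    rw [hsub]
    constructor
    · exact Complex.differentiable_exp.comp_differentiableOn
        ((differentiableOn_const _).mul hhol)
    · refine (Complex.continuous_exp.comp_continuousOn
        ((continuousOn_const).mul hcont)).mono ?_
      rw [closure_openStrip]
  have hB : ∃ c < Real.pi / (1 - 0), ∃ B,
      f =O[comap (_root_.abs ∘ Complex.re) atTop ⊓ 𝓟 (Complex.im ⁻¹' Ioo 0 1)]
        fun z => Real.exp (B * Real.exp (c * |z.re|)) := by
    refine ⟨0, by positivity, max K 0, ?_⟩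
    refine Asymptotics.IsBigO.of_bound 1 ?_
    refine Filter.eventually_inf_principal.2 (Filter.Eventually.of_forall ?_)
    intro z hz
    have hzc : z ∈ closedStrip := by
      rw [hsub] at hz; exact ⟨hz.1.le, hz.2.le⟩
    have h1 : (h z).im ≤ max K 0 :=
      le_trans (le_trans (le_abs_self _) (Complex.abs_im_le_norm _))
        (le_trans (hK z hzc) (le_max_left _ _))
    rw [hnorm, one_mul, Real.norm_eq_abs, abs_of_pos (Real.exp_pos _)]
    apply Real.exp_le_exp.2
    simpa using h1
  have hle0 : ∀ z : ℂ, z.im = 0 → ‖f z‖ ≤ 1 := by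
    intro z hz
    have hzr : z = (z.re : ℂ) := Complex.ext (by simp) (by simp [hz])
    rw [hnorm, hzr, hb0 z.re, Real.exp_zero]
  have hle1 : ∀ z : ℂ, z.im = 1 → ‖f z‖ ≤ 1 := by
    intro z hz
    have hzr : z = (z.re : ℂ) + Complex.I := Complex.ext (by simp) (by simp [hz])
    rw [hnorm, hzr, hb1 z.re, Real.exp_zero]
  intro z hz
  have := PhragmenLindelof.horizontal_strip hfd hB hle0 hle1 hz.1 hz.2
  rw [hnorm] at this
  exact Real.exp_le_one_iff.1 this

/-- A bounded holomorphic function on the open strip, continuous up to the boundary, which is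
real-valued on both boundary lines, is a real constant. -/
theorem bounded_holomorphic_strip_real_boundary_constant
    (h : ℂ → ℂ)
    (hcont : ContinuousOn h closedStrip)
    (hhol : DifferentiableOn ℂ h openStrip)
    (hbdd : ∃ K : ℝ, ∀ z ∈ closedStrip, ‖h z‖ ≤ K)
    (hb0 : ∀ s : ℝ, (h (s : ℂ)).im = 0)
    (hb1 : ∀ s : ℝ, (h (s + Complex.I)).im = 0) :
    ∃ c : ℝ, ∀ z ∈ closedStrip, h z = (c : ℂ) := by
  obtain ⟨K, hK⟩ := hbdd
  have him : ∀ z ∈ closedStrip, (h z).im = 0 := by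
    intro z hz
    have h1 := im_nonpos_of_boundary h hcont hhol ⟨K, hK⟩ hb0 hb1 z hz
    have h2 := im_nonpos_of_boundary (fun w => -h w) hcont.neg hhol.neg
      ⟨K, fun w hw => by simpa using hK w hw⟩ (by simp [hb0]) (by simp [hb1]) z hz
    simp only [Complex.neg_im, neg_nonpos] at h2
    linarith
  have hopen : IsOpen openStrip := by
    rw [openStrip_eq]; exact isOpen_Ioo.preimage Complex.continuous_im
  have hderiv : ∀ z ∈ openStrip, fderivWithin ℂ h openStrip z = 0 := by
    intro z hz
    have hzd : DifferentiableAt ℂ h z := hhol.differentiableAt (hopen.mem_nhds hz)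
    have heq : (fun w => (h w).im) =ᶠ[nhds z] fun _ => (0 : ℝ) := by
      filter_upwards [hopen.mem_nhds hz] with w hw
      exact him w ⟨hw.1.le, hw.2.le⟩
    have h0 : fderiv ℝ (fun w => (h w).im) z = 0 := by
      rw [heq.fderiv_eq]; exact fderiv_const_apply 0
    have hcomp : fderiv ℝ (fun w => (h w).im) z
        = Complex.imCLM.comp ((fderiv ℂ h z).restrictScalars ℝ) := by
      have hhr : HasFDerivAt h ((fderiv ℂ h z).restrictScalars ℝ) z :=
        hzd.hasFDerivAt.restrictScalars ℝ
      exact (Complex.imCLM.hasFDerivAt.comp z hhr).fderiv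
    set D := fderiv ℂ h z with hD
    have hzero : Complex.imCLM.comp (D.restrictScalars ℝ) = 0 := hcomp ▸ h0
    have him1 : (D 1).im = 0 := by
      have := congrArg (fun L : ℂ →L[ℝ] ℝ => L 1) hzero
      simpa using this
    have himI : (D Complex.I).im = 0 := by
      have := congrArg (fun L : ℂ →L[ℝ] ℝ => L Complex.I) hzero
      simpa using this
    have hDI : D Complex.I = Complex.I * D 1 := by
      have : D (Complex.I • (1 : ℂ)) = Complex.I • D 1 := D.map_smul _ _
      simpa using this
    have hre1 : (D 1).re = 0 := by
      rw [hDI] at himI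
      simpa using himI
    have hD1 : D 1 = 0 := Complex.ext hre1 him1
    have : D = 0 := ContinuousLinearMap.ext_ring (by simpa using hD1)
    rw [fderivWithin_of_isOpen hopen hz, ← hD, this]
  have hconv : Convex ℝ openStrip := by
    rw [openStrip_eq]
    exact (convex_Ioo (0:ℝ) 1).linear_preimage Complex.imLm
  have hmid : (Complex.I / 2 : ℂ) ∈ openStrip := by
    constructor
    · simp
    · rw [show (Complex.I / 2 : ℂ).im = 1/2 by simp]; norm_num
  have hconst : ∀ z ∈ openStrip, h z = h (Complex.I / 2) := fun z hz =>
    hconv.is_const_of_fderivWithin_eq_zero hhol hderiv hz hmid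
  have hmidc : (Complex.I / 2 : ℂ) ∈ closedStrip := ⟨hmid.1.le, hmid.2.le⟩
  refine ⟨(h (Complex.I / 2)).re, ?_⟩
  have heqon : Set.EqOn h (fun _ => ((h (Complex.I / 2)).re : ℂ)) closedStrip := by
    have hsub2 : openStrip ⊆ closedStrip := fun w hw => ⟨hw.1.le, hw.2.le⟩
    refine Set.EqOn.of_subset_closure (fun z hz => ?_) hcont continuousOn_const
      hsub2 (by rw [closure_openStrip])
    rw [hconst z hz]
    exact Complex.ext rfl (him _ hmidc)
  exact fun z hz => heqon hz
end

section
/- Let θ ∈ (0, π) and let ζ : S̄ → ℂ be continuous on the closed strip S̄, holomorphic on the open strip S, such that ζ(s + i·0) ∈ ℝ and ζ(s + i·1) ∈ ℝ·e^{iθ} for every s ∈ ℝ, and such that ζ(s + it) → 0, uniformly in t ∈ [0,1], as s → +∞ and as s → −∞. Then ζ is identically zero. -/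
open Real Complex

/-- Linearized transversality at a transverse Lagrangian double point: a holomorphic function
on the strip, continuous up to the boundary, taking values in `ℝ` on `{t = 0}` and in
`ℝ·e^{iθ}` (with `0 < θ < π`) on `{t = 1}`, and decaying to `0` uniformly as `s → ±∞`,
vanishes identically. -/
theorem holomorphic_strip_rotated_boundary_vanishes
    (θ : ℝ) (hθ0 : 0 < θ) (hθπ : θ < π)
    (ζ : ℂ → ℂ)
    (hcont : ContinuousOn ζ closedStrip)
    (hhol : DifferentiableOn ℂ ζ openStrip)
    (hb0 : ∀ s : ℝ, (ζ (s : ℂ)).im = 0)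
    (hb1 : ∀ s : ℝ, ∃ r : ℝ, ζ (s + Complex.I) = (r : ℂ) * Complex.exp (θ * Complex.I))
    (hdecay : ∀ ε : ℝ, 0 < ε → ∃ R : ℝ, ∀ s t : ℝ, R ≤ |s| → 0 ≤ t → t ≤ 1 →
      ‖ζ (s + t * Complex.I)‖ ≤ ε) :
    ∀ z ∈ closedStrip, ζ z = 0 := by
  have hset : Complex.im ⁻¹' Set.Ioo (0:ℝ) 1 = openStrip := by
    ext z; simp [openStrip, Set.mem_Ioo]
  have hclosedset : Complex.im ⁻¹' Set.Icc (0:ℝ) 1 = closedStrip := by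
    ext z; simp [closedStrip, Set.mem_Icc]
  have hclosure : closure openStrip = closedStrip := by
    rw [← hset, Complex.closure_preimage_im, closure_Ioo one_ne_zero.symm, hclosedset]
  have hopen : IsOpen openStrip := by
    rw [← hset]; exact isOpen_Ioo.preimage Complex.continuous_im
  have hsub : openStrip ⊆ closedStrip := by
    intro z hz; exact ⟨hz.1.le, hz.2.le⟩
  -- boundedness of ζ on the closed strip
  obtain ⟨R, hR⟩ := hdecay 1 one_pos
  set K : Set ℂ := closedStrip ∩ Complex.re ⁻¹' Set.Icc (-|R|) |R| with hK
  have hKcompact : IsCompact K := by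
    apply Metric.isCompact_of_isClosed_isBounded
    · apply IsClosed.inter
      · rw [← hclosedset]; exact isClosed_Icc.preimage Complex.continuous_im
      · exact isClosed_Icc.preimage Complex.continuous_re
    · apply (Metric.isBounded_closedBall (x := (0:ℂ)) (r := |R| + 1)).subset
      intro z hz
      simp only [Metric.mem_closedBall, dist_zero_right]
      calc ‖z‖ ≤ |z.re| + |z.im| := Complex.norm_le_abs_re_add_abs_im z
        _ ≤ |R| + 1 := by
            have h1 : |z.re| ≤ |R| := abs_le.mpr hz.2
            have h2 : |z.im| ≤ 1 := by
              rw [abs_le]; exact ⟨by linarith [hz.1.1], hz.1.2⟩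
            linarith
  obtain ⟨C, hC⟩ := hKcompact.exists_bound_of_continuousOn (hcont.mono Set.inter_subset_left)
  set M : ℝ := max C 1 with hM
  have hM1 : (1:ℝ) ≤ M := le_max_right _ _
  have hM0 : (0:ℝ) < M := lt_of_lt_of_le one_pos hM1
  have hζM : ∀ z ∈ closedStrip, ‖ζ z‖ ≤ M := by
    intro z hz
    rcases le_or_gt |z.re| |R| with hle | hgt
    · exact le_trans (hC z ⟨hz, abs_le.mp hle⟩) (le_max_left _ _)
    · have := hR z.re z.im (le_trans (le_abs_self R) hgt.le) hz.1 hz.2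
      rw [Complex.re_add_im] at this
      exact this.trans hM1
  -- The auxiliary function h
  set h : ℂ → ℂ := fun z => ζ z * Complex.exp (-(θ:ℂ) * z) with hh
  have hexp_diff : Differentiable ℂ fun z : ℂ => Complex.exp (-(θ:ℂ) * z) :=
    Complex.differentiable_exp.comp ((differentiable_const _).mul differentiable_id)
  have hhdiff : DifferentiableOn ℂ h openStrip := hhol.mul hexp_diff.differentiableOn
  have hhcont : ContinuousOn h closedStrip := hcont.mul hexp_diff.continuous.continuousOn
  have hnorm_h : ∀ z : ℂ, ‖h z‖ = ‖ζ z‖ * Real.exp (-(θ * z.re)) := by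
    intro z
    rw [hh]
    simp only [norm_mul, Complex.norm_exp]
    congr 1
    simp [Complex.mul_re]
  -- h is real on both boundary lines
  have him_bd : ∀ z ∈ closedStrip, z.im = 0 ∨ z.im = 1 → (h z).im = 0 := by
    intro z _ hz
    rcases hz with hz0 | hz1
    · have hzeq : z = (z.re : ℂ) := Complex.ext (by simp) (by simp [hz0])
      have h1 : (ζ z).im = 0 := by rw [hzeq]; exact hb0 z.re
      have h2 : Complex.exp (-(θ:ℂ) * z) = ((Real.exp (-(θ * z.re)) : ℝ) : ℂ) := by
        rw [Complex.ofReal_exp]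
        congr 1
        conv_lhs => rw [hzeq]
        push_cast; ring
      rw [hh]; simp only [h2, Complex.mul_im, Complex.ofReal_im, Complex.ofReal_re]
      rw [h1]; ring
    · have hzeq : z = (z.re : ℂ) + Complex.I := Complex.ext (by simp) (by simp [hz1])
      obtain ⟨r, hr⟩ := hb1 z.re
      have : h z = ((r * Real.exp (-(θ * z.re)) : ℝ) : ℂ) := by
        show ζ z * Complex.exp (-(θ:ℂ) * z) = _
        conv_lhs => rw [hzeq]
        rw [hr, Complex.ofReal_mul, Complex.ofReal_exp, mul_assoc, ← Complex.exp_add]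
        congr 2
        push_cast; ring
      rw [this]; exact Complex.ofReal_im _
  -- Phragmén–Lindelöf: main estimate for exp(c * h) with c = ±I
  have key : ∀ c : ℂ, c.re = 0 → ‖c‖ = 1 →
      ∀ z ∈ closedStrip, (c * h z).re ≤ 0 := by
    intro c hcre hcnorm z hz
    have hPL : ‖Complex.exp (c * h z)‖ ≤ 1 := by
      apply PhragmenLindelof.horizontal_strip
        (a := (0:ℝ)) (b := 1) (C := 1)
        (f := fun w => Complex.exp (c * h w))
      · constructor
        · rw [hset]
          exact (Complex.differentiable_exp.comp_differentiableOn
            (((differentiable_const c).differentiableOn).mul hhdiff))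
        · rw [hset, hclosure]
          exact Complex.continuous_exp.comp_continuousOn
            (((continuous_const (y := c)).continuousOn).mul hhcont)
      · refine ⟨θ, by simpa using hθπ, M, ?_⟩
        apply Asymptotics.IsBigO.of_bound 1
        rw [Filter.eventually_inf_principal]
        apply Filter.Eventually.of_forall
        intro w hw
        have hwS : w ∈ openStrip := by rw [← hset]; exact hw
        have hb : ‖h w‖ ≤ M * Real.exp (θ * |w.re|) := by
          rw [hnorm_h]
          apply mul_le_mul (hζM w (hsub hwS)) ?_ (Real.exp_nonneg _) hM0.le
          apply Real.exp_le_exp.mpr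
          have : -w.re ≤ |w.re| := neg_le_abs _
          nlinarith
        calc ‖Complex.exp (c * h w)‖ = Real.exp ((c * h w).re) := by
              rw [Complex.norm_exp]
          _ ≤ Real.exp ‖h w‖ := by
              apply Real.exp_le_exp.mpr
              calc (c * h w).re ≤ ‖c * h w‖ := Complex.re_le_norm _
                _ = ‖h w‖ := by rw [norm_mul, hcnorm, one_mul]
          _ ≤ Real.exp (M * Real.exp (θ * |w.re|)) := Real.exp_le_exp.mpr hb
          _ ≤ 1 * ‖Real.exp (M * Real.exp (θ * |w.re|))‖ := by
              rw [one_mul, Real.norm_eq_abs, abs_of_pos (Real.exp_pos _)]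
      · intro w hw
        have hwC : w ∈ closedStrip := by rw [← hclosedset]; exact ⟨le_of_eq hw.symm, by rw [hw]; norm_num⟩
        have := him_bd w hwC (Or.inl hw)
        rw [Complex.norm_exp, Real.exp_le_one_iff]
        rw [Complex.mul_re, this, hcre]; ring_nf; exact le_refl 0
      · intro w hw
        have hwC : w ∈ closedStrip := by rw [← hclosedset]; exact ⟨by rw [hw]; norm_num, le_of_eq hw⟩
        have := him_bd w hwC (Or.inr hw)
        rw [Complex.norm_exp, Real.exp_le_one_iff]
        rw [Complex.mul_re, this, hcre]; ring_nf; exact le_refl 0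
      · exact hz.1
      · exact hz.2
    rw [Complex.norm_exp, Real.exp_le_one_iff] at hPL
    exact hPL
  -- conclude Im h = 0 on the closed strip
  have him0 : ∀ z ∈ closedStrip, (h z).im = 0 := by
    intro z hz
    have h1 := key Complex.I (by simp) (by simp) z hz
    have h2 := key (-Complex.I) (by simp) (by simp) z hz
    rw [Complex.mul_re, Complex.I_re, Complex.I_im] at h1
    rw [Complex.mul_re, Complex.neg_re, Complex.neg_im, Complex.I_re, Complex.I_im] at h2
    simp only [zero_mul, one_mul, zero_sub, neg_zero, neg_neg, neg_mul] at h1 h2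
    linarith
  -- h is constant on the open strip
  have hconvex : Convex ℝ openStrip := by
    rw [← hset]
    exact (convex_Ioo (0:ℝ) 1).linear_preimage Complex.imLm
  have hderiv0 : ∀ x ∈ openStrip, fderivWithin ℂ h openStrip x = 0 := by
    intro x hx
    have hdA : DifferentiableAt ℂ h x := hhdiff.differentiableAt (hopen.mem_nhds hx)
    set d : ℂ := deriv h x with hd
    have hDA : HasDerivAt h d x := hdA.hasDerivAt
    have hFA : HasFDerivAt h (ContinuousLinearMap.smulRight (1 : ℂ →L[ℂ] ℂ) d) x :=
      hDA.hasFDerivAt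
    have hFAr := hFA.restrictScalars ℝ
    have hImFA : HasFDerivAt (fun w => (h w).im)
        (Complex.imCLM.comp ((ContinuousLinearMap.smulRight (1 : ℂ →L[ℂ] ℂ) d).restrictScalars ℝ)) x :=
      Complex.imCLM.hasFDerivAt.comp x hFAr
    have heq : (fun w => (h w).im) =ᶠ[nhds x] fun _ => (0:ℝ) := by
      filter_upwards [hopen.mem_nhds hx] with w hw
      exact him0 w (hsub hw)
    have hzeroFA : HasFDerivAt (fun _ : ℂ => (0:ℝ))
        (Complex.imCLM.comp ((ContinuousLinearMap.smulRight (1 : ℂ →L[ℂ] ℂ) d).restrictScalars ℝ)) x :=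
      hImFA.congr_of_eventuallyEq heq.symm
    have hL0 : (Complex.imCLM.comp ((ContinuousLinearMap.smulRight (1 : ℂ →L[ℂ] ℂ) d).restrictScalars ℝ)) = 0 :=
      hzeroFA.unique (hasFDerivAt_const 0 x)
    have him : d.im = 0 := by
      have := congrFun (congrArg DFunLike.coe hL0) 1
      simpa using this
    have hre : d.re = 0 := by
      have := congrFun (congrArg DFunLike.coe hL0) Complex.I
      simpa using this
    have hd0 : d = 0 := Complex.ext hre him
    rw [fderivWithin_of_isOpen hopen hx]
    have h0map : (ContinuousLinearMap.smulRight (1 : ℂ →L[ℂ] ℂ) (0:ℂ)) = 0 := by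
      ext w; simp
    have : HasFDerivAt h (0 : ℂ →L[ℂ] ℂ) x := by
      rw [← h0map, ← hd0]; exact hFA
    exact this.fderiv
  have hconst : ∀ x ∈ openStrip, ∀ y ∈ openStrip, h x = h y := fun x hx y hy =>
    hconvex.is_const_of_fderivWithin_eq_zero hhdiff hderiv0 hx hy
  -- the constant is zero, by decay as s → +∞
  have hmem : ∀ n : ℕ, ((n : ℂ) + Complex.I / 2) ∈ openStrip := by
    intro n
    constructor <;> simp [openStrip, Complex.add_im, Complex.div_im] <;> norm_num
  have hh0 : ∀ z ∈ openStrip, h z = 0 := by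
    intro z hz
    have hbound : ∀ n : ℕ, ‖h z‖ ≤ M * Real.exp (-(θ * n)) := by
      intro n
      rw [hconst z hz _ (hmem n), hnorm_h]
      have hre : ((n : ℂ) + Complex.I / 2).re = (n : ℝ) := by simp
      rw [hre]
      apply mul_le_mul (hζM _ (hsub (hmem n))) le_rfl (Real.exp_nonneg _) hM0.le
    have htend : Filter.Tendsto (fun n : ℕ => M * Real.exp (-(θ * n))) Filter.atTop (nhds 0) := by
      rw [show (0:ℝ) = M * 0 by ring]
      apply Filter.Tendsto.const_mul
      apply Real.tendsto_exp_atBot.comp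
      apply Filter.tendsto_neg_atBot_iff.mpr
      exact Filter.Tendsto.const_mul_atTop hθ0 tendsto_natCast_atTop_atTop
    have : ‖h z‖ ≤ 0 := ge_of_tendsto htend (Filter.Eventually.of_forall hbound)
    exact norm_le_zero_iff.mp this
  have hζ0 : ∀ z ∈ openStrip, ζ z = 0 := by
    intro z hz
    have := hh0 z hz
    rw [hh] at this
    rcases mul_eq_zero.mp this with h' | h'
    · exact h'
    · exact absurd h' (Complex.exp_ne_zero _)
  -- extend to the closed strip by continuity
  intro z hz
  have hzc : z ∈ closure openStrip := by rw [hclosure]; exact hz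
  have hne : (nhdsWithin z openStrip).NeBot := mem_closure_iff_nhdsWithin_neBot.mp hzc
  have h1 : Filter.Tendsto ζ (nhdsWithin z openStrip) (nhds (ζ z)) :=
    (hcont z hz).mono_left (nhdsWithin_mono z hsub)
  have h2 : Filter.Tendsto ζ (nhdsWithin z openStrip) (nhds 0) := by
    apply Filter.Tendsto.congr' _ tendsto_const_nhds
    filter_upwards [self_mem_nhdsWithin] with w hw
    exact (hζ0 w hw).symm
  exact tendsto_nhds_unique h1 h2
end

section
/- Let (A, ∂) be the free unital DGA over ℤ/2 on a set Q of generators, i.e. A is the free unital associative ℤ/2-algebra on Q and ∂ is a ℤ/2-linear derivation with ∂ ∘ ∂ = 0, and let ε : A → ℤ/2 be an augmentation. Set ∂^ε := Ψ^ε ∘ ∂ ∘ (Ψ^ε)^{-1}. Then for every generator q ∈ Q the word-length-0 component (∂^ε(q))⁰ vanishes, and the ℤ/2-linear map ∂_ε : A¹ → A¹ defined on generators by ∂_ε(q) := (∂^ε(q))¹ satisfies ∂_ε ∘ ∂_ε = 0; that is, the linearisation of the DGA induced by ε is a chain complex. -/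
noncomputable section

/-- The free unital associative `ℤ/2`-algebra on a set `Q` of generators, realised as the
tensor algebra over `ℤ/2` of the free vector space on `Q`. -/
abbrev FreeDGA (Q : Type) := TensorAlgebra (ZMod 2) (Q →₀ ZMod 2)

/-- The generator of the free algebra corresponding to `q ∈ Q`. -/
def FreeDGA.gen {Q : Type} (q : Q) : FreeDGA Q :=
  TensorAlgebra.ι (ZMod 2) (Finsupp.single q 1)

/-- The projection onto the word-length-`i` component for the word-length grading of the
free algebra. -/
def FreeDGA.proj (Q : Type) (i : ℕ) : FreeDGA Q →ₗ[ZMod 2] FreeDGA Q :=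
  haveI : GradedAlgebra
      ((LinearMap.range
        (TensorAlgebra.ι (ZMod 2) : (Q →₀ ZMod 2) →ₗ[ZMod 2] FreeDGA Q) ^ ·)) :=
    TensorAlgebra.gradedAlgebra
  GradedAlgebra.proj
    ((LinearMap.range
        (TensorAlgebra.ι (ZMod 2) : (Q →₀ ZMod 2) →ₗ[ZMod 2] FreeDGA Q) ^ ·)) i

section GenLemmas

variable {ι R A : Type*} [DecidableEq ι] [AddMonoid ι] [CommSemiring R] [Semiring A]
  [Algebra R A] (𝒜 : ι → Submodule R A) [GradedAlgebra 𝒜]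

theorem FreeDGA.gen_ne {i j : ι} {x : A} (hx : x ∈ 𝒜 i) (hij : i ≠ j) :
    GradedAlgebra.proj 𝒜 j x = 0 := by
  rw [GradedAlgebra.proj_apply, DirectSum.decompose_of_mem_ne 𝒜 hx hij]

theorem FreeDGA.gen_same {i : ι} {x : A} (hx : x ∈ 𝒜 i) :
    GradedAlgebra.proj 𝒜 i x = x := by
  rw [GradedAlgebra.proj_apply, DirectSum.decompose_of_mem_same 𝒜 hx]

theorem FreeDGA.gen_mem (i : ι) (x : A) : GradedAlgebra.proj 𝒜 i x ∈ 𝒜 i := by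
  rw [GradedAlgebra.proj_apply]; exact SetLike.coe_mem _

theorem FreeDGA.gen_decomp (x : A) :
    ∃ s : Finset ι, x = ∑ n ∈ s, GradedAlgebra.proj 𝒜 n x := by
  classical
  refine ⟨(DirectSum.decompose 𝒜 x).support, ?_⟩
  conv_lhs => rw [← DirectSum.sum_support_decompose 𝒜 x]
  exact Finset.sum_congr rfl fun n _ => (GradedAlgebra.proj_apply 𝒜 n x).symm

end GenLemmas

theorem FreeDGA.gen_mul0 {ι R A : Type*} [DecidableEq ι]
    [AddCommMonoid ι] [PartialOrder ι] [CanonicallyOrderedAdd ι]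
    [CommSemiring R] [Semiring A] [Algebra R A] (𝒜 : ι → Submodule R A) [GradedAlgebra 𝒜]
    (a b : A) :
    GradedAlgebra.proj 𝒜 0 (a * b) = GradedAlgebra.proj 𝒜 0 a * GradedAlgebra.proj 𝒜 0 b := by
  have h := (GradedRing.projZeroRingHom 𝒜).map_mul a b
  simpa only [GradedRing.projZeroRingHom_apply, GradedAlgebra.proj_apply] using h

set_option maxHeartbeats 1600000 in
/-- Linearisation of a free dg-algebra over `ℤ/2` by an augmentation `ε`: writing
`∂^ε = Ψ^ε ∘ ∂ ∘ (Ψ^ε)⁻¹`, the word-length-0 component of `∂^ε(q)` vanishes for every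
generator `q`, and the linear map `∂_ε : q ↦ (∂^ε q)¹` squares to zero, i.e. the linearisation
of the DGA induced by `ε` is a chain complex. -/
theorem FreeDGA.linearisation_is_complex (Q : Type)
    (d : FreeDGA Q →ₗ[ZMod 2] FreeDGA Q)
    (hder : ∀ a b : FreeDGA Q, d (a * b) = d a * b + a * d b)
    (hdd : ∀ a : FreeDGA Q, d (d a) = 0)
    (ε : FreeDGA Q →ₐ[ZMod 2] ZMod 2)
    (hε : ∀ a : FreeDGA Q, ε (d a) = 0)
    (Ψ Ψinv : FreeDGA Q →ₐ[ZMod 2] FreeDGA Q)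
    (hΨ : ∀ q : Q, Ψ (FreeDGA.gen q) =
      FreeDGA.gen q + algebraMap (ZMod 2) (FreeDGA Q) (ε (FreeDGA.gen q)))
    (hinv1 : ∀ a : FreeDGA Q, Ψinv (Ψ a) = a)
    (hinv2 : ∀ a : FreeDGA Q, Ψ (Ψinv a) = a) :
    (∀ q : Q, FreeDGA.proj Q 0 (Ψ (d (Ψinv (FreeDGA.gen q)))) = 0) ∧
    (∀ q : Q,
      FreeDGA.proj Q 1
        (Ψ (d (Ψinv (FreeDGA.proj Q 1 (Ψ (d (Ψinv (FreeDGA.gen q)))))))) = 0) := by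
  classical
  set R := (LinearMap.range
      (TensorAlgebra.ι (ZMod 2) : (Q →₀ ZMod 2) →ₗ[ZMod 2] FreeDGA Q)) with hR
  -- characteristic two
  have haa : ∀ a : FreeDGA Q, a + a = 0 := by
    intro a
    have h1 : a + a = (2 : ZMod 2) • a := (two_smul (ZMod 2) a).symm
    rw [h1, show (2 : ZMod 2) = 0 by decide, zero_smul]
  -- basic properties of the projections
  have P_ne : ∀ {i j : ℕ} {x : FreeDGA Q}, x ∈ (R ^ ·) i → i ≠ j →
      FreeDGA.proj Q j x = 0 := by
    intro i j x hx hij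
    unfold FreeDGA.proj
    exact FreeDGA.gen_ne _ hx hij
  have P_same : ∀ {i : ℕ} {x : FreeDGA Q}, x ∈ (R ^ ·) i → FreeDGA.proj Q i x = x := by
    intro i x hx
    unfold FreeDGA.proj
    exact FreeDGA.gen_same _ hx
  have P_mem : ∀ (i : ℕ) (x : FreeDGA Q), FreeDGA.proj Q i x ∈ (R ^ ·) i := by
    intro i x
    unfold FreeDGA.proj
    exact FreeDGA.gen_mem _ i x
  have P_decomp : ∀ x : FreeDGA Q, ∃ s : Finset ℕ, x = ∑ n ∈ s, FreeDGA.proj Q n x := by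
    intro x
    unfold FreeDGA.proj
    exact FreeDGA.gen_decomp _ x
  have P_mul0 : ∀ a b : FreeDGA Q,
      FreeDGA.proj Q 0 (a * b) = FreeDGA.proj Q 0 a * FreeDGA.proj Q 0 b := by
    intro a b
    unfold FreeDGA.proj
    exact FreeDGA.gen_mul0 _ a b
  -- memberships
  have mem0 : ∀ r : ZMod 2, algebraMap (ZMod 2) (FreeDGA Q) r ∈ (R ^ ·) 0 := by
    intro r
    show _ ∈ R ^ 0
    rw [pow_zero, Submodule.one_eq_range]
    exact ⟨r, rfl⟩
  have mem1 : ∀ v : Q →₀ ZMod 2, TensorAlgebra.ι (ZMod 2) v ∈ (R ^ ·) 1 := by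
    intro v
    show _ ∈ R ^ 1
    rw [pow_one]
    exact ⟨v, rfl⟩
  have memmul : ∀ {i j : ℕ} {x y : FreeDGA Q}, x ∈ (R ^ ·) i → y ∈ (R ^ ·) j →
      x * y ∈ (R ^ ·) (i + j) := by
    intro i j x y hx hy
    show _ ∈ R ^ (i + j)
    rw [pow_add]
    exact Submodule.mul_mem_mul hx hy
  -- Ψ on arbitrary elements of the module of generators
  have hΨι : ∀ v : Q →₀ ZMod 2,
      Ψ (TensorAlgebra.ι (ZMod 2) v) = TensorAlgebra.ι (ZMod 2) v +
        algebraMap (ZMod 2) (FreeDGA Q) (ε (TensorAlgebra.ι (ZMod 2) v)) := by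
    have hfg : Ψ.toLinearMap ∘ₗ TensorAlgebra.ι (ZMod 2) =
        (TensorAlgebra.ι (ZMod 2) : (Q →₀ ZMod 2) →ₗ[ZMod 2] FreeDGA Q) +
          (Algebra.linearMap (ZMod 2) (FreeDGA Q)) ∘ₗ ε.toLinearMap ∘ₗ
            TensorAlgebra.ι (ZMod 2) := by
      apply Finsupp.lhom_ext
      intro q c
      have hc : Finsupp.single q c = c • Finsupp.single q 1 := by
        rw [Finsupp.smul_single, smul_eq_mul, mul_one]
      rw [hc, map_smul, map_smul]
      congr 1
      exact hΨ q
    intro v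
    exact congrArg (fun f => f v) (congrArg DFunLike.coe hfg)
  -- the degree-0 part of `Ψ x` is `ε x`
  have hφ : ∀ x : FreeDGA Q,
      FreeDGA.proj Q 0 (Ψ x) = algebraMap (ZMod 2) (FreeDGA Q) (ε x) := by
    intro x
    induction x using TensorAlgebra.induction with
    | algebraMap r =>
        rw [AlgHom.commutes, AlgHom.commutes, P_same (mem0 r)]
        simp
    | ι v =>
        rw [hΨι v, map_add, P_ne (mem1 v) one_ne_zero, P_same (mem0 _), zero_add]
    | mul a b ha hb =>
        rw [map_mul, P_mul0, ha, hb, map_mul, map_mul]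
    | add a b ha hb =>
        rw [map_add, map_add, map_add, ha, hb, map_add]
  -- the twisted differential
  have hD0 : ∀ x : FreeDGA Q, FreeDGA.proj Q 0 (Ψ (d (Ψinv x))) = 0 := by
    intro x
    rw [hφ, hε, map_zero]
  have hDder : ∀ a b : FreeDGA Q,
      Ψ (d (Ψinv (a * b))) = Ψ (d (Ψinv a)) * b + a * Ψ (d (Ψinv b)) := by
    intro a b
    rw [map_mul, hder, map_add, map_mul, map_mul, hinv2, hinv2]
  have hDD : ∀ x : FreeDGA Q, Ψ (d (Ψinv (Ψ (d (Ψinv x))))) = 0 := by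
    intro x
    rw [hinv1, hdd, map_zero]
  -- products of positive-degree elements have no component in degrees 0 and 1
  have hzero2 : ∀ (k : ℕ), k ≤ 1 → ∀ a b : FreeDGA Q,
      FreeDGA.proj Q 0 a = 0 → FreeDGA.proj Q 0 b = 0 →
      FreeDGA.proj Q k (a * b) = 0 := by
    intro k hk a b ha hb
    obtain ⟨s, hs⟩ := P_decomp a
    obtain ⟨t, ht⟩ := P_decomp b
    have hs' : a = ∑ n ∈ s.erase 0, FreeDGA.proj Q n a := by
      rw [Finset.sum_erase s ha]; exact hs
    have ht' : b = ∑ n ∈ t.erase 0, FreeDGA.proj Q n b := by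
      rw [Finset.sum_erase t hb]; exact ht
    calc FreeDGA.proj Q k (a * b)
        = FreeDGA.proj Q k (∑ n ∈ s.erase 0, ∑ m ∈ t.erase 0,
            FreeDGA.proj Q n a * FreeDGA.proj Q m b) := by
          rw [← Finset.sum_mul_sum, ← hs', ← ht']
      _ = ∑ n ∈ s.erase 0, ∑ m ∈ t.erase 0,
            FreeDGA.proj Q k (FreeDGA.proj Q n a * FreeDGA.proj Q m b) := by
          rw [map_sum]; exact Finset.sum_congr rfl fun n _ => map_sum _ _ _
      _ = 0 := by
          apply Finset.sum_eq_zero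
          intro n hn
          apply Finset.sum_eq_zero
          intro m hm
          have hn0 : n ≠ 0 := Finset.ne_of_mem_erase hn
          have hm0 : m ≠ 0 := Finset.ne_of_mem_erase hm
          have hmem := memmul (P_mem n a) (P_mem m b)
          refine P_ne hmem ?_
          omega
  -- D of a product of positive-degree elements has no degree-1 component
  have hprod1 : ∀ a b : FreeDGA Q,
      FreeDGA.proj Q 0 a = 0 → FreeDGA.proj Q 0 b = 0 →
      FreeDGA.proj Q 1 (Ψ (d (Ψinv (a * b)))) = 0 := by
    intro a b ha hb
    rw [hDder, map_add, hzero2 1 le_rfl _ _ (hD0 a) hb, hzero2 1 le_rfl _ _ ha (hD0 b),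
      add_zero]
  -- main lemma: if y has no components in degrees 0 and 1 then D y has no degree-1 component
  have hmain : ∀ y : FreeDGA Q,
      FreeDGA.proj Q 0 y = 0 → FreeDGA.proj Q 1 y = 0 →
      FreeDGA.proj Q 1 (Ψ (d (Ψinv y))) = 0 := by
    intro y hy0 hy1
    obtain ⟨s, hs⟩ := P_decomp y
    have key : ∀ n ∈ s, FreeDGA.proj Q 1 (Ψ (d (Ψinv (FreeDGA.proj Q n y)))) = 0 := by
      intro n _
      match n with
      | 0 => rw [hy0]; simp
      | 1 => rw [hy1]; simp
      | (m + 2) =>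
        have hmem : FreeDGA.proj Q (m + 2) y ∈ R * R ^ (m + 1) := by
          have := P_mem (m + 2) y
          rwa [show (R ^ ·) (m + 2) = R ^ (m + 2) from rfl, pow_succ'] at this
        refine Submodule.mul_induction_on hmem ?_ ?_
        · intro x hx w hw
          have hx0 : FreeDGA.proj Q 0 x = 0 := by
            refine P_ne (i := 1) ?_ one_ne_zero
            show x ∈ R ^ 1
            rwa [pow_one]
          have hw0 : FreeDGA.proj Q 0 w = 0 :=
            P_ne (i := m + 1) hw (by omega)
          exact hprod1 x w hx0 hw0
        · intro x w hx hw
          rw [map_add, map_add, map_add, map_add, hx, hw, add_zero]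
    calc FreeDGA.proj Q 1 (Ψ (d (Ψinv y)))
        = ∑ n ∈ s, FreeDGA.proj Q 1 (Ψ (d (Ψinv (FreeDGA.proj Q n y)))) := by
          conv_lhs => rw [hs]
          rw [map_sum, map_sum, map_sum, map_sum]
      _ = 0 := Finset.sum_eq_zero key
  refine ⟨fun q => hD0 _, fun q => ?_⟩
  set x := Ψ (d (Ψinv (FreeDGA.gen q))) with hx
  set u := FreeDGA.proj Q 1 x with hu
  have hu1 : u ∈ (R ^ ·) 1 := P_mem 1 x
  have hy0 : FreeDGA.proj Q 0 (x + u) = 0 := by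
    rw [map_add, hD0, P_ne hu1 one_ne_zero, add_zero]
  have hy1 : FreeDGA.proj Q 1 (x + u) = 0 := by
    rw [map_add, ← hu, P_same hu1, haa]
  have h := hmain (x + u) hy0 hy1
  rw [map_add, map_add, map_add, map_add, hx] at h
  rw [hDD, map_zero, zero_add] at h
  exact h
end
end

section
/- Let (A′, ∂′) and (A, ∂) be free unital DGAs over ℤ/2 on generator sets Q′ and Q respectively, and let Φ : A′ → A be a unital algebra homomorphism with Φ ∘ ∂′ = ∂ ∘ Φ. If ε is an augmentation of (A, ∂), then ε′ := ε ∘ Φ is an augmentation of (A′, ∂′). Moreover, the map Ψ^ε ∘ Φ ∘ (Ψ^{ε′})^{-1} has vanishing word-length-0 component on every generator q′ ∈ Q′, and the ℤ/2-linear map Φ_ε : A′¹ → A¹ sending each generator q′ to the word-length-1 component of (Ψ^ε ∘ Φ ∘ (Ψ^{ε′})^{-1})(q′) is a chain map between the linearisations: ∂_ε ∘ Φ_ε = Φ_ε ∘ ∂′_{ε′}. -/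
noncomputable section

namespace FreeDGAAux

abbrev grading (Q : Type) : ℕ → Submodule (ZMod 2) (FreeDGA Q) :=
  (LinearMap.range (TensorAlgebra.ι (ZMod 2) : (Q →₀ ZMod 2) →ₗ[ZMod 2] FreeDGA Q) ^ ·)

abbrev counit (Q : Type) : FreeDGA Q →ₐ[ZMod 2] ZMod 2 := TensorAlgebra.algebraMapInv

lemma proj_eq (Q : Type) (i : ℕ) :
    FreeDGA.proj Q i = GradedAlgebra.proj (grading Q) i := rfl

lemma proj_of_mem_same {Q : Type} {i : ℕ} {x : FreeDGA Q} (h : x ∈ grading Q i) :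
    FreeDGA.proj Q i x = x := by
  rw [proj_eq, GradedAlgebra.proj_apply]
  exact DirectSum.decompose_of_mem_same _ h

lemma proj_of_mem_ne {Q : Type} {i j : ℕ} {x : FreeDGA Q} (h : x ∈ grading Q i)
    (hij : i ≠ j) : FreeDGA.proj Q j x = 0 := by
  rw [proj_eq, GradedAlgebra.proj_apply]
  exact DirectSum.decompose_of_mem_ne _ h hij

lemma counit_ι {Q : Type} (v : Q →₀ ZMod 2) :
    counit Q (TensorAlgebra.ι (ZMod 2) v) = 0 := by
  simp [counit, TensorAlgebra.algebraMapInv]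

lemma counit_algebraMap {Q : Type} (r : ZMod 2) :
    counit Q (algebraMap (ZMod 2) (FreeDGA Q) r) = r :=
  TensorAlgebra.algebraMap_leftInverse _ r

lemma ι_mem {Q : Type} (v : Q →₀ ZMod 2) :
    TensorAlgebra.ι (ZMod 2) v ∈ grading Q 1 := by
  rw [grading, pow_one]
  exact LinearMap.mem_range_self _ v

lemma mem_grading_zero {Q : Type} {x : FreeDGA Q} (h : x ∈ grading Q 0) :
    ∃ r : ZMod 2, algebraMap (ZMod 2) (FreeDGA Q) r = x := by
  rw [grading, pow_zero] at h
  exact Submodule.mem_one.mp h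

lemma algebraMap_mem_grading_zero {Q : Type} (r : ZMod 2) :
    algebraMap (ZMod 2) (FreeDGA Q) r ∈ grading Q 0 := by
  rw [grading, pow_zero]
  exact Submodule.mem_one.mpr ⟨r, rfl⟩

lemma counit_pos {Q : Type} {n : ℕ} {x : FreeDGA Q} (h : x ∈ grading Q (n + 1)) :
    counit Q x = 0 := by
  rw [grading, pow_succ] at h
  refine Submodule.mul_induction_on h ?_ ?_
  · rintro a _ b ⟨v, rfl⟩
    rw [map_mul, counit_ι, mul_zero]
  · intro x y hx hy; rw [map_add, hx, hy, add_zero]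

lemma pi0_eq {Q : Type} (x : FreeDGA Q) :
    FreeDGA.proj Q 0 x = algebraMap (ZMod 2) (FreeDGA Q) (counit Q x) := by
  refine DirectSum.Decomposition.inductionOn (grading Q)
    (motive := fun x => FreeDGA.proj Q 0 x = algebraMap (ZMod 2) (FreeDGA Q) (counit Q x))
    ?_ ?_ ?_ x
  · simp
  · rintro i ⟨w, hw⟩
    match i with
    | 0 =>
      obtain ⟨r, rfl⟩ := mem_grading_zero hw
      rw [proj_of_mem_same hw, counit_algebraMap]
    | (n + 1) =>
      rw [proj_of_mem_ne hw (Nat.succ_ne_zero n), counit_pos hw, map_zero]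
  · intro a b ha hb
    rw [map_add, map_add, map_add, ha, hb]


lemma proj1_mul_right {Q : Type} {m : ℕ} {u : FreeDGA Q} (hu : u ∈ grading Q (m + 1))
    (v : FreeDGA Q) :
    FreeDGA.proj Q 1 (u * v) = FreeDGA.proj Q 1 (u * FreeDGA.proj Q 0 v) := by
  refine DirectSum.Decomposition.inductionOn (grading Q)
    (motive := fun v => FreeDGA.proj Q 1 (u * v) = FreeDGA.proj Q 1 (u * FreeDGA.proj Q 0 v))
    ?_ ?_ ?_ v
  · simp
  · rintro i ⟨w, hw⟩
    match i with
    | 0 => rw [proj_of_mem_same hw]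
    | (n + 1) =>
      rw [proj_of_mem_ne hw (Nat.succ_ne_zero n), mul_zero, map_zero]
      have hmem : u * w ∈ grading Q (m + 1 + (n + 1)) := by
        rw [grading, pow_add]
        exact Submodule.mul_mem_mul hu hw
      exact proj_of_mem_ne hmem (by omega)
  · intro a b ha hb
    rw [mul_add, map_add, ha, hb, map_add, mul_add, map_add]

lemma proj1_mul_zero {Q : Type} {u v : FreeDGA Q} (hu : FreeDGA.proj Q 0 u = 0)
    (hv : FreeDGA.proj Q 0 v = 0) : FreeDGA.proj Q 1 (u * v) = 0 := by
  have key : ∀ w : FreeDGA Q,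
      FreeDGA.proj Q 1 (w * v) = FreeDGA.proj Q 1 (FreeDGA.proj Q 0 w * v) := by
    intro w
    refine DirectSum.Decomposition.inductionOn (grading Q)
      (motive := fun w => FreeDGA.proj Q 1 (w * v) = FreeDGA.proj Q 1 (FreeDGA.proj Q 0 w * v))
      ?_ ?_ ?_ w
    · simp
    · rintro i ⟨w, hw⟩
      match i with
      | 0 => rw [proj_of_mem_same hw]
      | (n + 1) =>
        rw [proj_of_mem_ne hw (Nat.succ_ne_zero n), zero_mul, map_zero,
          proj1_mul_right hw v, hv, mul_zero, map_zero]
    · intro a b ha hb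
      rw [add_mul, map_add, ha, hb, map_add, add_mul, map_add]
  rw [key u, hu, zero_mul, map_zero]

lemma proj1_mulmap {Q' Q : Type} (F : FreeDGA Q' → FreeDGA Q)
    (hadd : ∀ a b, F (a + b) = F a + F b)
    (hmul : ∀ a b, F (a * b) = F a * F b)
    (halg : ∀ r : ZMod 2, F (algebraMap (ZMod 2) (FreeDGA Q') r)
      = algebraMap (ZMod 2) (FreeDGA Q) r)
    (hF : ∀ x, counit Q (F x) = counit Q' x)
    (x : FreeDGA Q') :
    FreeDGA.proj Q 1 (F x) = FreeDGA.proj Q 1 (F (FreeDGA.proj Q' 1 x)) := by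
  have hF0 : F 0 = 0 := by
    have := halg 0; simpa using this
  refine DirectSum.Decomposition.inductionOn (grading Q')
    (motive := fun x => FreeDGA.proj Q 1 (F x) = FreeDGA.proj Q 1 (F (FreeDGA.proj Q' 1 x)))
    ?_ ?_ ?_ x
  · show FreeDGA.proj Q 1 (F 0) = FreeDGA.proj Q 1 (F (FreeDGA.proj Q' 1 0))
    rw [map_zero, hF0]
  · rintro i ⟨w, hw⟩
    show FreeDGA.proj Q 1 (F w) = FreeDGA.proj Q 1 (F (FreeDGA.proj Q' 1 w))
    match i, hw with
    | 0, hw =>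
      obtain ⟨r, hr⟩ := mem_grading_zero hw
      rw [proj_of_mem_ne hw (by omega : (0:ℕ) ≠ 1), hF0, map_zero, ← hr, halg,
        proj_of_mem_ne (algebraMap_mem_grading_zero r) (by omega : (0:ℕ) ≠ 1)]
    | 1, hw => rw [proj_of_mem_same hw]
    | (n + 2), hw =>
      rw [proj_of_mem_ne hw (by omega : n + 2 ≠ 1), hF0, map_zero]
      have hw2 : w ∈ grading Q' (n + 1) *
          LinearMap.range (TensorAlgebra.ι (ZMod 2) : (Q' →₀ ZMod 2) →ₗ[ZMod 2] FreeDGA Q') := by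
        rw [grading, pow_succ] at hw
        exact hw
      refine Submodule.mul_induction_on hw2 ?_ ?_
      · rintro a ha b ⟨v, rfl⟩
        rw [hmul]
        apply proj1_mul_zero
        · rw [pi0_eq, hF, counit_pos ha, map_zero]
        · rw [pi0_eq, hF, counit_ι, map_zero]
      · intro a b ha hb
        rw [hadd, map_add, ha, hb, add_zero]
  · intro a b ha hb
    rw [hadd, map_add, ha, hb, map_add, hadd, map_add]

lemma proj1_deriv {Q : Type} (D : FreeDGA Q → FreeDGA Q)
    (hadd : ∀ a b, D (a + b) = D a + D b)
    (hsc : ∀ r : ZMod 2, D (algebraMap (ZMod 2) (FreeDGA Q) r) = 0)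
    (hLeib : ∀ a b, D (a * b) = D a * b + a * D b)
    (h0 : ∀ x, counit Q (D x) = 0)
    (x : FreeDGA Q) :
    FreeDGA.proj Q 1 (D x) = FreeDGA.proj Q 1 (D (FreeDGA.proj Q 1 x)) := by
  have hD0 : D 0 = 0 := by
    have := hsc 0; simpa using this
  refine DirectSum.Decomposition.inductionOn (grading Q)
    (motive := fun x => FreeDGA.proj Q 1 (D x) = FreeDGA.proj Q 1 (D (FreeDGA.proj Q 1 x)))
    ?_ ?_ ?_ x
  · show FreeDGA.proj Q 1 (D 0) = FreeDGA.proj Q 1 (D (FreeDGA.proj Q 1 0))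
    rw [map_zero, hD0]
  · rintro i ⟨w, hw⟩
    show FreeDGA.proj Q 1 (D w) = FreeDGA.proj Q 1 (D (FreeDGA.proj Q 1 w))
    match i, hw with
    | 0, hw =>
      obtain ⟨r, hr⟩ := mem_grading_zero hw
      rw [proj_of_mem_ne hw (by omega : (0:ℕ) ≠ 1), hD0, map_zero, ← hr, hsc, map_zero]
    | 1, hw => rw [proj_of_mem_same hw]
    | (n + 2), hw =>
      rw [proj_of_mem_ne hw (by omega : n + 2 ≠ 1), hD0, map_zero]
      have hw2 : w ∈ grading Q (n + 1) *
          LinearMap.range (TensorAlgebra.ι (ZMod 2) : (Q →₀ ZMod 2) →ₗ[ZMod 2] FreeDGA Q) := by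
        rw [grading, pow_succ] at hw
        exact hw
      refine Submodule.mul_induction_on hw2 ?_ ?_
      · rintro a ha b ⟨v, rfl⟩
        rw [hLeib, map_add]
        rw [proj1_mul_zero (by rw [pi0_eq, h0, map_zero])
            (proj_of_mem_ne (ι_mem v) (by omega : (1:ℕ) ≠ 0)),
          proj1_mul_zero (proj_of_mem_ne ha (Nat.succ_ne_zero n))
            (by rw [pi0_eq, h0, map_zero]), add_zero]
      · intro a b ha hb
        rw [hadd, map_add, ha, hb, add_zero]
  · intro a b ha hb
    rw [hadd, map_add, ha, hb, map_add, hadd, map_add]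


lemma counit_psi {Q : Type} (Ψ : FreeDGA Q →ₐ[ZMod 2] FreeDGA Q)
    (ε : FreeDGA Q →ₐ[ZMod 2] ZMod 2)
    (hΨ : ∀ q : Q, Ψ (FreeDGA.gen q) =
      FreeDGA.gen q + algebraMap (ZMod 2) (FreeDGA Q) (ε (FreeDGA.gen q))) :
    ∀ x, counit Q (Ψ x) = ε x := by
  have h : (counit Q).comp Ψ = ε := by
    apply TensorAlgebra.hom_ext
    apply Finsupp.lhom_ext
    intro q b
    have hb : Finsupp.single q b = b • Finsupp.single q (1 : ZMod 2) := by
      rw [Finsupp.smul_single, smul_eq_mul, mul_one]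
    rw [hb, map_smul, map_smul]
    congr 1
    show counit Q (Ψ (TensorAlgebra.ι (ZMod 2) (Finsupp.single q 1)))
      = ε (TensorAlgebra.ι (ZMod 2) (Finsupp.single q 1))
    rw [show TensorAlgebra.ι (ZMod 2) (Finsupp.single q (1 : ZMod 2)) = FreeDGA.gen q from rfl,
      hΨ, map_add]
    simp only [FreeDGA.gen]
    rw [counit_ι, counit_algebraMap, zero_add]
  exact fun x => AlgHom.congr_fun h x

end FreeDGAAux

open FreeDGAAux

/-- A DGA-morphism `Φ : (A′,∂′) → (A,∂)` of free unital DGAs over `ℤ/2` pulls an augmentation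
`ε` of `(A,∂)` back to the augmentation `ε′ = ε ∘ Φ` of `(A′,∂′)`; moreover
`Ψ^ε ∘ Φ ∘ (Ψ^{ε′})⁻¹` has vanishing word-length-0 component on generators, and the induced
linear map `Φ_ε : q′ ↦ (Ψ^ε ∘ Φ ∘ (Ψ^{ε′})⁻¹ (q′))¹` is a chain map between the
linearisations: `∂_ε ∘ Φ_ε = Φ_ε ∘ ∂′_{ε′}`. -/
theorem FreeDGA.linearised_chain_map (Q' Q : Type)
    (d' : FreeDGA Q' →ₗ[ZMod 2] FreeDGA Q')
    (hder' : ∀ a b : FreeDGA Q', d' (a * b) = d' a * b + a * d' b)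
    (hdd' : ∀ a : FreeDGA Q', d' (d' a) = 0)
    (d : FreeDGA Q →ₗ[ZMod 2] FreeDGA Q)
    (hder : ∀ a b : FreeDGA Q, d (a * b) = d a * b + a * d b)
    (hdd : ∀ a : FreeDGA Q, d (d a) = 0)
    (Φ : FreeDGA Q' →ₐ[ZMod 2] FreeDGA Q)
    (hΦ : ∀ a : FreeDGA Q', Φ (d' a) = d (Φ a))
    (ε : FreeDGA Q →ₐ[ZMod 2] ZMod 2)
    (hε : ∀ a : FreeDGA Q, ε (d a) = 0)
    (Ψ Ψinv : FreeDGA Q →ₐ[ZMod 2] FreeDGA Q)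
    (hΨ : ∀ q : Q, Ψ (FreeDGA.gen q) =
      FreeDGA.gen q + algebraMap (ZMod 2) (FreeDGA Q) (ε (FreeDGA.gen q)))
    (hinv1 : ∀ a : FreeDGA Q, Ψinv (Ψ a) = a)
    (hinv2 : ∀ a : FreeDGA Q, Ψ (Ψinv a) = a)
    (Ψ' Ψ'inv : FreeDGA Q' →ₐ[ZMod 2] FreeDGA Q')
    (hΨ' : ∀ q' : Q', Ψ' (FreeDGA.gen q') =
      FreeDGA.gen q' + algebraMap (ZMod 2) (FreeDGA Q') ((ε.comp Φ) (FreeDGA.gen q')))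
    (hinv1' : ∀ a : FreeDGA Q', Ψ'inv (Ψ' a) = a)
    (hinv2' : ∀ a : FreeDGA Q', Ψ' (Ψ'inv a) = a) :
    (∀ a : FreeDGA Q', (ε.comp Φ) (d' a) = 0) ∧
    (∀ q' : Q', FreeDGA.proj Q 0 (Ψ (Φ (Ψ'inv (FreeDGA.gen q')))) = 0) ∧
    (∀ q' : Q',
      FreeDGA.proj Q 1
          (Ψ (d (Ψinv (FreeDGA.proj Q 1 (Ψ (Φ (Ψ'inv (FreeDGA.gen q')))))))) =
        FreeDGA.proj Q 1
          (Ψ (Φ (Ψ'inv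
            (FreeDGA.proj Q' 1 (Ψ' (d' (Ψ'inv (FreeDGA.gen q'))))))))) := by
  have ceΨ : ∀ x, counit Q (Ψ x) = ε x := counit_psi Ψ ε hΨ
  have ceΨ' : ∀ x, counit Q' (Ψ' x) = (ε.comp Φ) x := counit_psi Ψ' (ε.comp Φ) hΨ'
  have cF : ∀ x : FreeDGA Q', counit Q (Ψ (Φ (Ψ'inv x))) = counit Q' x := by
    intro x
    rw [ceΨ]
    rw [show ε (Φ (Ψ'inv x)) = (ε.comp Φ) (Ψ'inv x) from rfl, ← ceΨ', hinv2']
  have cD : ∀ x : FreeDGA Q, counit Q (Ψ (d (Ψinv x))) = 0 := by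
    intro x; rw [ceΨ]; exact hε _
  refine ⟨?_, ?_, ?_⟩
  · intro a
    show ε (Φ (d' a)) = 0
    rw [hΦ, hε]
  · intro q'
    rw [pi0_eq, cF,
      show FreeDGA.gen q' = TensorAlgebra.ι (ZMod 2) (Finsupp.single q' 1) from rfl,
      counit_ι, map_zero]
  · intro q'
    have hd1 : d 1 = 0 := by
      have h11 := hder 1 1
      simp only [mul_one, one_mul] at h11
      exact left_eq_add.mp h11
    have hD := proj1_deriv (fun x => Ψ (d (Ψinv x)))
      (fun a b => by
        show Ψ (d (Ψinv (a + b))) = Ψ (d (Ψinv a)) + Ψ (d (Ψinv b))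
        rw [map_add, map_add, map_add])
      (fun r => by
        show Ψ (d (Ψinv (algebraMap (ZMod 2) (FreeDGA Q) r))) = 0
        rw [AlgHom.commutes, Algebra.algebraMap_eq_smul_one, map_smul, hd1,
          smul_zero, map_zero])
      (fun a b => by
        show Ψ (d (Ψinv (a * b))) = Ψ (d (Ψinv a)) * b + a * Ψ (d (Ψinv b))
        rw [map_mul, hder, map_add, map_mul, map_mul, hinv2, hinv2])
      cD
    have hDx : ∀ x, FreeDGA.proj Q 1 (Ψ (d (Ψinv x)))
        = FreeDGA.proj Q 1 (Ψ (d (Ψinv (FreeDGA.proj Q 1 x)))) := fun x => hD x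
    have hF := proj1_mulmap (fun x => Ψ (Φ (Ψ'inv x)))
      (fun a b => by
        show Ψ (Φ (Ψ'inv (a + b))) = Ψ (Φ (Ψ'inv a)) + Ψ (Φ (Ψ'inv b))
        rw [map_add, map_add, map_add])
      (fun a b => by
        show Ψ (Φ (Ψ'inv (a * b))) = Ψ (Φ (Ψ'inv a)) * Ψ (Φ (Ψ'inv b))
        rw [map_mul, map_mul, map_mul])
      (fun r => by
        show Ψ (Φ (Ψ'inv (algebraMap (ZMod 2) (FreeDGA Q') r)))
          = algebraMap (ZMod 2) (FreeDGA Q) r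
        rw [AlgHom.commutes, AlgHom.commutes, AlgHom.commutes])
      cF
    have hFx : ∀ x, FreeDGA.proj Q 1 (Ψ (Φ (Ψ'inv x)))
        = FreeDGA.proj Q 1 (Ψ (Φ (Ψ'inv (FreeDGA.proj Q' 1 x)))) := fun x => hF x
    rw [← hDx (Ψ (Φ (Ψ'inv (FreeDGA.gen q')))), hinv1, ← hΦ,
      ← hinv1' (d' (Ψ'inv (FreeDGA.gen q'))), hFx (Ψ' (d' (Ψ'inv (FreeDGA.gen q')))), hinv1']
end
end
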